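/- arXiv:1308.0324 — 5 statements merged into one kernel-verified Lean document; each statement's English description precedes it below -/
import Mathlib

section
/- Let t ≥ 2 and n ≥ t + 4. For every i with 2 ≤ i ≤ n − t − 3: if ν_i(n,t) < ν_{i+1}(n,t), then ν_{i+1}(n,t) < ν_{i+2}(n,t). Consequently, max{ν_i(n,t) : 2 ≤ i ≤ n − t − 1} = max{ν_2(n,t), ν_{n−t−1}(n,t)}. -/
open Finset

abbrev SetPartition (n : ℕ) := Finpartition (Finset.univ : Finset (Fin n))

def IsTIntersecting (n t : ℕ) (A : Set (SetPartition n)) : Prop :=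
  ∀ p ∈ A, ∀ q ∈ A, t ≤ (p.parts ∩ q.parts).card

noncomputable def M (n t : ℕ) : ℕ :=
  sSup {m : ℕ | ∃ A : Set (SetPartition n), IsTIntersecting n t A ∧ A.ncard = m}

def IsNontrivTIntersecting (n t : ℕ) (A : Set (SetPartition n)) : Prop :=
  IsTIntersecting n t A ∧ {b : Finset (Fin n) | ∀ p ∈ A, b ∈ p.parts}.ncard < t

noncomputable def Mtilde (n t : ℕ) : ℕ :=
  sSup {m : ℕ | ∃ A : Set (SetPartition n), IsNontrivTIntersecting n t A ∧ A.ncard = m}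

def fixedSet {n : ℕ} (p : SetPartition n) : Finset (Fin n) :=
  Finset.univ.filter (fun i => ({i} : Finset (Fin n)) ∈ p.parts)

noncomputable def Btilde (m : ℕ) : ℕ :=
  Nat.card {p : SetPartition m // ∀ b ∈ p.parts, b.card ≠ 1}

noncomputable def Bell (m : ℕ) : ℕ := Nat.card (SetPartition m)

noncomputable def gammaQ (n t l : ℕ) : ℚ :=
  ((∑ i ∈ Finset.range (n - l + 2), (n - l + 1).choose i * Btilde (n - (l + t) / 2 + 1 - i) : ℕ) : ℚ) /
  ((∑ i ∈ Finset.range (n - l + 1), (n - l).choose i * Btilde (n - (l + t) / 2 - i) : ℕ) : ℚ)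

noncomputable def maxCond (n t l : ℕ) : Prop :=
  ((l - t : ℕ) : ℚ) / (2 * ((l - 1 : ℕ) : ℚ)) * gammaQ n t l ≤ 1

def blockOf {n : ℕ} (p : SetPartition n) (i : Fin n) : Finset (Fin n) :=
  (p.parts.filter (fun b => i ∈ b)).sup id

def fixParts {n : ℕ} (i j : Fin n) (p : SetPartition n) : Finset (Finset (Fin n)) :=
  if i ≠ j ∧ j ∈ blockOf p i then
    (p.parts \ {blockOf p i}) ∪ {({i} : Finset (Fin n)), blockOf p i \ {i}}
  else p.parts

def shiftParts {n : ℕ} (v w : Fin n) (p : SetPartition n) : Finset (Finset (Fin n)) :=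
  if ({w} : Finset (Fin n)) ∈ p.parts ∧ ({v} : Finset (Fin n)) ∉ p.parts then
    (p.parts \ {blockOf p v, ({w} : Finset (Fin n))}) ∪
      {insert w (blockOf p v \ {v}), ({v} : Finset (Fin n))}
  else p.parts

def FixClosed {n : ℕ} (A : Set (SetPartition n)) : Prop :=
  ∀ p ∈ A, ∀ i j : Fin n, i ≠ j → ∀ q : SetPartition n, q.parts = fixParts i j p → q ∈ A

def ShiftClosed {n : ℕ} (A : Set (SetPartition n)) : Prop :=
  ∀ p ∈ A, ∀ v w : Fin n, v < w → ∀ q : SetPartition n, q.parts = shiftParts v w p → q ∈ A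

def DClosedOn {n : ℕ} (A : Set (SetPartition n)) (S : Set (Fin n)) : Prop :=
  ∀ p ∈ A, ∀ v ∈ S, ∀ w ∈ S, v ≠ w → ∀ q : SetPartition n, q.parts = shiftParts v w p → q ∈ A

def Hfam (n t i : ℕ) : Finset (Finset (Fin n)) :=
  Finset.univ.filter (fun H : Finset (Fin n) =>
    (H ⊆ Finset.univ.filter (fun x : Fin n => x.val < t + i) ∧ H.card = t + 1 ∧
      Finset.univ.filter (fun x : Fin n => x.val < t) ⊆ H) ∨
    (H ⊆ Finset.univ.filter (fun x : Fin n => x.val < t + i) ∧ H.card = t + i - 1 ∧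
      Finset.univ.filter (fun x : Fin n => t ≤ x.val ∧ x.val < t + i) ⊆ H))

def upset (n : ℕ) (C : Finset (Finset (Fin n))) : Finset (Finset (Fin n)) :=
  Finset.univ.filter (fun S => ∃ c ∈ C, c ⊆ S)

noncomputable def nu (n t i : ℕ) : ℕ :=
  ∑ S ∈ upset n (Hfam n t i), Btilde (n - S.card)

def minFixedSets {n : ℕ} (A : Set (SetPartition n)) : Set (Finset (Fin n)) :=
  {E | (∃ p ∈ A, fixedSet p = E) ∧ ∀ p ∈ A, fixedSet p ⊆ E → fixedSet p = E}

noncomputable def splus {n : ℕ} (A : Set (SetPartition n)) : ℕ :=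
  sSup {m : ℕ | ∃ E ∈ minFixedSets A, m = E.sup (fun x => x.val + 1)}


-- ==================== auxiliary development ====================

section Aux

instance setPartitionFinite (n : ℕ) : Finite (SetPartition n) :=
  Finite.of_injective (fun p => p.parts) (fun _ _ h => Finpartition.ext h)

lemma btilde_two_pos : 0 < Btilde 2 := by
  have : Nonempty {p : SetPartition 2 // ∀ b ∈ p.parts, b.card ≠ 1} := by
    refine ⟨⟨Finpartition.indiscrete ?_, ?_⟩⟩
    · simp [Finset.univ_nonempty.ne_empty]
    · intro b hb
      simp only [Finpartition.indiscrete_parts, mem_singleton] at hb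
      subst hb; simp
  exact Nat.card_pos

section growsec
variable {n : ℕ}

private def ι : Fin (n+1) ↪ Fin (n+2) := Fin.castSuccEmb

private lemma last_not_mem_map (b : Finset (Fin (n+1))) : Fin.last (n+1) ∉ b.map ι := by
  simp only [mem_map, not_exists]
  rintro x ⟨hx, hx2⟩
  exact absurd hx2 (Fin.castSucc_lt_last x).ne

private def grow (p : SetPartition (n+1)) : Finset (Finset (Fin (n+2))) :=
  insert (insert (Fin.last (n+1)) (((p.part 0).map ι)))
    ((p.parts.erase (p.part 0)).image (fun b => b.map ι))

private lemma part0_mem (p : SetPartition (n+1)) : p.part 0 ∈ p.parts :=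
  p.part_mem.2 (mem_univ 0)

private def growP (p : SetPartition (n+1)) : SetPartition (n+2) where
  parts := grow p
  supIndep := by
    rw [Finset.supIndep_iff_pairwiseDisjoint]
    intro x hx y hy hxy
    simp only [grow, coe_insert, Set.mem_insert_iff, coe_image, Set.mem_image, mem_coe,
      mem_erase] at hx hy
    have hdis : ∀ b c : Finset (Fin (n+1)), b ∈ p.parts → c ∈ p.parts → b ≠ c →
        Disjoint (b.map ι) (c.map ι) := by
      intro b c hb hc hbc
      rw [Finset.disjoint_map]
      exact p.disjoint hb hc hbc
    rcases hx with hx | ⟨b, ⟨hbne, hb⟩, rfl⟩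
    · rcases hy with hy | ⟨c, ⟨hcne, hc⟩, rfl⟩
      · exact absurd (hx.trans hy.symm) hxy
      · subst hx
        simp only [Function.onFun, id_eq]
        rw [Finset.disjoint_insert_left]
        exact ⟨last_not_mem_map c, hdis _ _ (part0_mem p) hc (fun h => hcne h.symm)⟩
    · rcases hy with hy | ⟨c, ⟨hcne, hc⟩, rfl⟩
      · subst hy
        simp only [Function.onFun, id_eq]
        rw [Finset.disjoint_insert_right]
        exact ⟨last_not_mem_map b, hdis _ _ hb (part0_mem p) hbne⟩
      · simp only [Function.onFun, id_eq]
        exact hdis _ _ hb hc (fun h => hxy (by rw [h]))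
  sup_parts := by
    apply Finset.Subset.antisymm (Finset.subset_univ _)
    intro x _
    rw [Finset.mem_sup]
    rcases eq_or_ne x (Fin.last (n+1)) with rfl | hx
    · exact ⟨_, mem_insert_self _ _, mem_insert_self _ _⟩
    · obtain ⟨y, rfl⟩ := Fin.exists_castSucc_eq.mpr hx
      obtain ⟨b, hb, hyb⟩ := p.exists_mem (mem_univ y)
      rcases eq_or_ne b (p.part 0) with rfl | hbne
      · exact ⟨_, mem_insert_self _ _, mem_insert_of_mem (mem_map_of_mem ι hyb)⟩
      · exact ⟨b.map ι, mem_insert_of_mem (mem_image_of_mem _ (mem_erase.mpr ⟨hbne, hb⟩)),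
          mem_map_of_mem ι hyb⟩
  bot_notMem := by
    simp only [grow, bot_eq_empty, mem_insert, mem_image, mem_erase, not_or, not_exists]
    constructor
    · intro h
      exact (insert_nonempty _ _).ne_empty h.symm
    · rintro b ⟨⟨hbne, hb⟩, hmap⟩
      exact (((p.nonempty_of_mem_parts hb).map (f := ι)).ne_empty) hmap

private lemma growP_nosingle (p : SetPartition (n+1)) (hp : ∀ b ∈ p.parts, b.card ≠ 1) :
    ∀ b ∈ (growP p).parts, b.card ≠ 1 := by
  intro b hb
  simp only [growP, grow, mem_insert, mem_image, mem_erase] at hb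
  rcases hb with rfl | ⟨c, ⟨hcne, hc⟩, rfl⟩
  · rw [card_insert_of_notMem (last_not_mem_map _), card_map]
    have := card_pos.mpr (p.nonempty_of_mem_parts (part0_mem p))
    omega
  · rw [card_map]; exact hp c hc

private lemma growP_inj_aux (p q : SetPartition (n+1)) (h : (growP p).parts = (growP q).parts) :
    p.parts ⊆ q.parts := by
  intro b hb
  rcases eq_or_ne b (p.part 0) with rfl | hbne
  · have hmem : insert (Fin.last (n+1)) ((p.part 0).map ι) ∈ (growP q).parts := by
      rw [← h]; exact mem_insert_self _ _
    simp only [growP, grow, mem_insert, mem_image, mem_erase] at hmem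
    rcases hmem with heq | ⟨c, ⟨hcne, hc⟩, heq⟩
    · have h2 : (p.part 0).map ι = (q.part 0).map ι := by
        rw [← Finset.erase_insert (last_not_mem_map (p.part 0)),
          ← Finset.erase_insert (last_not_mem_map (q.part 0)), heq]
      have h3 : p.part 0 = q.part 0 := Finset.map_injective ι h2
      rw [h3]; exact part0_mem q
    · exfalso
      have : Fin.last (n+1) ∈ c.map ι := by rw [heq]; exact mem_insert_self _ _
      exact last_not_mem_map c this
  · have hmem : b.map ι ∈ (growP q).parts := by
      rw [← h]
      exact mem_insert_of_mem (mem_image_of_mem _ (mem_erase.mpr ⟨hbne, hb⟩))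
    simp only [growP, grow, mem_insert, mem_image, mem_erase] at hmem
    rcases hmem with heq | ⟨c, ⟨hcne, hc⟩, heq⟩
    · exfalso
      have : Fin.last (n+1) ∈ b.map ι := by rw [heq]; exact mem_insert_self _ _
      exact last_not_mem_map b this
    · rw [Finset.map_injective ι heq.symm]; exact hc

private def growF (n : ℕ) (x : {p : SetPartition (n+1) // ∀ b ∈ p.parts, b.card ≠ 1}) :
    {p : SetPartition (n+2) // ∀ b ∈ p.parts, b.card ≠ 1} :=
  ⟨growP x.1, growP_nosingle x.1 x.2⟩

private lemma growF_inj (n : ℕ) : Function.Injective (growF n) := by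
  rintro ⟨p, hp⟩ ⟨q, hq⟩ hpq
  simp only [growF, Subtype.mk.injEq] at hpq ⊢
  have h : (growP p).parts = (growP q).parts := by rw [hpq]
  exact Finpartition.ext
    (Finset.Subset.antisymm (growP_inj_aux p q h) (growP_inj_aux q p h.symm))

end growsec

lemma btilde_mono : ∀ m, 1 ≤ m → Btilde m ≤ Btilde (m+1) := by
  rintro (_ | n) h1
  · omega
  · exact Nat.card_le_card_of_injective (growF n) (growF_inj n)

noncomputable def Phi (s m : ℕ) : ℕ := ∑ c ∈ Finset.range (m+1), (m.choose c) * Btilde (s + c)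

lemma phi_succ (s m : ℕ) : Phi s (m+1) = Phi s m + Phi (s+1) m := by
  unfold Phi
  rw [Finset.sum_range_succ' (fun c => ((m+1).choose c) * Btilde (s + c)) (m+1),
      Finset.sum_range_succ' (fun c => (m.choose c) * Btilde (s + c)) m]
  simp only [Nat.choose_succ_succ, add_mul, Nat.choose_zero_right, one_mul, Nat.add_zero]
  rw [Finset.sum_add_distrib]
  have h1 : ∑ c ∈ Finset.range (m+1), (m.choose (c+1)) * Btilde (s+(c+1))
      = ∑ c ∈ Finset.range m, (m.choose (c+1)) * Btilde (s+(c+1)) := by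
    rw [Finset.sum_range_succ, Nat.choose_succ_self, zero_mul, add_zero]
  have h2 : ∑ c ∈ Finset.range (m+1), (m.choose c) * Btilde (s+(c+1))
      = ∑ c ∈ Finset.range (m+1), (m.choose c) * Btilde ((s+1)+c) := by
    apply Finset.sum_congr rfl
    intro c _
    rw [show s+(c+1) = (s+1)+c by omega]
  rw [h1, h2]
  ring

lemma phi_mono (s m : ℕ) (hs : 1 ≤ s) : Phi s m ≤ Phi (s+1) m := by
  apply Finset.sum_le_sum
  intro c _
  apply Nat.mul_le_mul_left
  have : Btilde (s+c) ≤ Btilde (s+c+1) := btilde_mono (s+c) (by omega)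
  simpa [show s+c+1 = s+1+c by omega] using this

lemma phi_pos (m : ℕ) : 0 < Phi 2 m := by
  unfold Phi
  have h0 : 0 < (m.choose 0) * Btilde (2 + 0) := by simpa using btilde_two_pos
  calc 0 < (m.choose 0) * Btilde (2+0) := h0
    _ ≤ _ := Finset.single_le_sum (f := fun c => (m.choose c) * Btilde (2 + c))
        (fun c _ => Nat.zero_le _) (Finset.mem_range.mpr (by omega))

lemma card_pre (n a : ℕ) (h : a ≤ n) :
    (Finset.univ.filter (fun x : Fin n => x.val < a)).card = a := by
  have he : (Finset.univ.filter (fun x : Fin n => x.val < a))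
      = (Finset.range a).attachFin (fun m hm => lt_of_lt_of_le (Finset.mem_range.mp hm) h) := by
    ext x
    simp [Finset.mem_attachFin]
  rw [he, Finset.card_attachFin, Finset.card_range]

lemma mem_W_iff (n t i : ℕ) (ht : 2 ≤ t) (hi : 1 ≤ i) (hn : t + i ≤ n) (S : Finset (Fin n)) :
    S ∈ upset n (Hfam n t i) ↔
      ((∀ x : Fin n, x.val < t → x ∈ S) ∧ ∃ x ∈ S, t ≤ x.val ∧ x.val < t + i) ∨
      ((∀ x : Fin n, t ≤ x.val → x.val < t + i → x ∈ S) ∧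
        ((Finset.univ.filter (fun x : Fin n => x.val < t)) \ S).card ≤ 1) := by
  simp only [upset, Hfam, Finset.mem_filter, Finset.mem_univ, true_and]
  constructor
  · rintro ⟨H, hHmem, hHS⟩
    rcases hHmem with ⟨h1, h2, h3⟩ | ⟨h1, h2, h3⟩
    · left
      constructor
      · intro x hx
        exact hHS (h3 (by simp [hx]))
      · have hc : (H \ Finset.univ.filter (fun x : Fin n => x.val < t)).card = 1 := by
          rw [Finset.card_sdiff_of_subset h3, h2, card_pre n t (by omega)]
          omega
        obtain ⟨x, hx⟩ := Finset.card_eq_one.mp hc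
        have hxH : x ∈ H \ Finset.univ.filter (fun x : Fin n => x.val < t) := by
          rw [hx]; exact Finset.mem_singleton_self x
        rw [Finset.mem_sdiff, Finset.mem_filter] at hxH
        obtain ⟨hx1, hx2⟩ := hxH
        have hxlt : x.val < t + i := by
          have := h1 hx1
          rw [Finset.mem_filter] at this
          exact this.2
        exact ⟨x, hHS hx1, by simpa using hx2, hxlt⟩
    · right
      constructor
      · intro x hx1 hx2
        exact hHS (h3 (by simp [hx1, hx2]))
      · have hsub : (Finset.univ.filter (fun x : Fin n => x.val < t)) \ S
            ⊆ (Finset.univ.filter (fun x : Fin n => x.val < t + i)) \ H := by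
          intro x hx
          rw [Finset.mem_sdiff, Finset.mem_filter] at hx ⊢
          exact ⟨⟨Finset.mem_univ x, by omega⟩, fun hxH => hx.2 (hHS hxH)⟩
        calc ((Finset.univ.filter (fun x : Fin n => x.val < t)) \ S).card
            ≤ ((Finset.univ.filter (fun x : Fin n => x.val < t + i)) \ H).card :=
              Finset.card_le_card hsub
          _ = 1 := by
              rw [Finset.card_sdiff_of_subset h1, h2, card_pre n (t+i) hn]
              omega
  · rintro (⟨hU, x, hxS, hx1, hx2⟩ | ⟨hT, hcard⟩)
    · refine ⟨insert x (Finset.univ.filter (fun y : Fin n => y.val < t)), ?_, ?_⟩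
      · left
        refine ⟨?_, ?_, ?_⟩
        · intro y hy
          rw [Finset.mem_insert] at hy
          rcases hy with rfl | hy
          · simp [hx2]
          · rw [Finset.mem_filter] at hy ⊢
            exact ⟨hy.1, by omega⟩
        · rw [Finset.card_insert_of_notMem (by simp [not_lt.mpr hx1]), card_pre n t (by omega)]
        · exact Finset.subset_insert _ _
      · rw [Finset.insert_subset_iff]
        refine ⟨hxS, ?_⟩
        intro y hy
        rw [Finset.mem_filter] at hy
        exact hU y hy.2
    · by_cases hUS : (Finset.univ.filter (fun x : Fin n => x.val < t)) \ S = ∅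
      · -- pre t ⊆ S; use first-type generator with x0 = ⟨t, _⟩
        have hUsub : ∀ y : Fin n, y.val < t → y ∈ S := by
          intro y hy
          by_contra hyS
          have : y ∈ (Finset.univ.filter (fun x : Fin n => x.val < t)) \ S := by
            rw [Finset.mem_sdiff, Finset.mem_filter]
            exact ⟨⟨Finset.mem_univ y, hy⟩, hyS⟩
          rw [hUS] at this
          exact absurd this (Finset.notMem_empty y)
        have hx0 : (⟨t, by omega⟩ : Fin n) ∈ S := hT _ (by simp) (by simp; omega)
        refine ⟨insert (⟨t, by omega⟩ : Fin n) (Finset.univ.filter (fun y : Fin n => y.val < t)),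
          ?_, ?_⟩
        · left
          refine ⟨?_, ?_, Finset.subset_insert _ _⟩
          · intro y hy
            rw [Finset.mem_insert] at hy
            rcases hy with rfl | hy
            · simp; omega
            · rw [Finset.mem_filter] at hy ⊢
              exact ⟨hy.1, by omega⟩
          · rw [Finset.card_insert_of_notMem (by simp), card_pre n t (by omega)]
        · rw [Finset.insert_subset_iff]
          refine ⟨hx0, fun y hy => hUsub y (by simpa using (Finset.mem_filter.mp hy).2)⟩
      · obtain ⟨u, hu⟩ := Finset.nonempty_iff_ne_empty.mpr hUS
        have hDu : (Finset.univ.filter (fun x : Fin n => x.val < t)) \ S = {u} := by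
          apply Finset.eq_singleton_iff_unique_mem.mpr
          refine ⟨hu, ?_⟩
          intro v hv
          by_contra hvu
          have : 2 ≤ ((Finset.univ.filter (fun x : Fin n => x.val < t)) \ S).card := by
            rw [← Finset.card_pair hvu]
            apply Finset.card_le_card
            intro w hw
            rw [Finset.mem_insert, Finset.mem_singleton] at hw
            rcases hw with rfl | rfl
            · exact hv
            · exact hu
          omega
        have huP : u.val < t ∧ u ∉ S := by
          have := hu
          rw [Finset.mem_sdiff, Finset.mem_filter] at this
          exact ⟨this.1.2, this.2⟩
        refine ⟨(Finset.univ.filter (fun x : Fin n => x.val < t + i)).erase u, ?_, ?_⟩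
        · right
          refine ⟨Finset.erase_subset _ _, ?_, ?_⟩
          · rw [Finset.card_erase_of_mem (by simp; omega), card_pre n (t+i) hn]
          · intro y hy
            rw [Finset.mem_filter] at hy
            rw [Finset.mem_erase]
            refine ⟨?_, by simp; omega⟩
            intro hyu
            subst hyu
            omega
        · intro y hy
          rw [Finset.mem_erase, Finset.mem_filter] at hy
          obtain ⟨hyu, _, hylt⟩ := hy
          by_cases hyt : y.val < t
          · by_contra hyS
            have : y ∈ (Finset.univ.filter (fun x : Fin n => x.val < t)) \ S := by
              rw [Finset.mem_sdiff, Finset.mem_filter]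
              exact ⟨⟨Finset.mem_univ y, hyt⟩, hyS⟩
            rw [hDu, Finset.mem_singleton] at this
            exact hyu this
          · exact hT y (by omega) hylt

def Rf (n t i : ℕ) : Finset (Fin n) := Finset.univ.filter (fun x => t+i+1 ≤ x.val)

def Xset (n t i : ℕ) (e : Fin n) : Finset (Finset (Fin n)) :=
  (Rf n t i).powerset.image (fun F => insert e (Finset.univ.filter (fun x : Fin n => x.val < t)) ∪ F)

def Yset (n t i : ℕ) : Finset (Finset (Fin n)) :=
  (Finset.univ.filter (fun x : Fin n => x.val < t)).biUnion
    (fun u => (Rf n t i).powerset.image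
      (fun F => ((Finset.univ.filter (fun x : Fin n => x.val < t+i)).erase u) ∪ F))

lemma mem_Xset (n t i : ℕ) (e : Fin n) (he : e.val = t+i) (S : Finset (Fin n)) :
    S ∈ Xset n t i e ↔ e ∈ S ∧ (∀ x : Fin n, x.val < t → x ∈ S) ∧
      (∀ x ∈ S, ¬(t ≤ x.val ∧ x.val < t+i)) := by
  simp only [Xset, Finset.mem_image, Finset.mem_powerset]
  constructor
  · rintro ⟨F, hF, rfl⟩
    refine ⟨Finset.mem_union_left _ (Finset.mem_insert_self _ _), ?_, ?_⟩
    · intro x hx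
      exact Finset.mem_union_left _ (Finset.mem_insert_of_mem (by simp [hx]))
    · intro x hx
      rw [Finset.mem_union, Finset.mem_insert, Finset.mem_filter] at hx
      rcases hx with (rfl | hx) | hx
      · omega
      · omega
      · have := hF hx
        rw [Rf, Finset.mem_filter] at this
        omega
  · rintro ⟨heS, hU, hmid⟩
    refine ⟨S.filter (fun x => t+i+1 ≤ x.val), ?_, ?_⟩
    · intro x hx
      rw [Finset.mem_filter] at hx
      rw [Rf, Finset.mem_filter]
      exact ⟨Finset.mem_univ x, hx.2⟩
    · ext x
      rw [Finset.mem_union, Finset.mem_insert, Finset.mem_filter, Finset.mem_filter]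
      constructor
      · rintro ((rfl | hx) | hx)
        · exact heS
        · exact hU x hx.2
        · exact hx.1
      · intro hxS
        rcases lt_or_ge x.val t with h1 | h1
        · exact Or.inl (Or.inr ⟨Finset.mem_univ x, h1⟩)
        · rcases lt_or_ge x.val (t+i) with h2 | h2
          · exact absurd ⟨h1, h2⟩ (hmid x hxS)
          · rcases eq_or_lt_of_le h2 with h3 | h3
            · have : x = e := Fin.ext (by omega)
              exact Or.inl (Or.inl this)
            · exact Or.inr ⟨hxS, by omega⟩

lemma mem_Yset (n t i : ℕ) (S : Finset (Fin n)) :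
    S ∈ Yset n t i ↔ (∀ x : Fin n, t ≤ x.val → x.val < t+i → x ∈ S) ∧
      (∀ x ∈ S, x.val ≠ t+i) ∧
      ∃ u : Fin n, u.val < t ∧ u ∉ S ∧ (∀ x : Fin n, x.val < t → x ≠ u → x ∈ S) := by
  simp only [Yset, Finset.mem_biUnion, Finset.mem_image, Finset.mem_powerset, Finset.mem_filter,
    Finset.mem_univ, true_and]
  constructor
  · rintro ⟨u, hu, F, hF, rfl⟩
    have hFv : ∀ x ∈ F, t+i+1 ≤ x.val := by
      intro x hx
      have := hF hx
      rw [Rf, Finset.mem_filter] at this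
      exact this.2
    refine ⟨?_, ?_, u, hu, ?_, ?_⟩
    · intro x hx1 hx2
      apply Finset.mem_union_left
      rw [Finset.mem_erase, Finset.mem_filter]
      exact ⟨fun h => by subst h; omega, Finset.mem_univ x, hx2⟩
    · intro x hx
      rw [Finset.mem_union, Finset.mem_erase, Finset.mem_filter] at hx
      rcases hx with ⟨_, _, h⟩ | h
      · omega
      · have := hFv x h; omega
    · rw [Finset.mem_union, Finset.mem_erase]
      push_neg
      refine ⟨fun h => absurd rfl h, ?_⟩
      intro hc
      have := hFv u hc
      omega
    · intro x hx hxu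
      apply Finset.mem_union_left
      rw [Finset.mem_erase, Finset.mem_filter]
      exact ⟨hxu, Finset.mem_univ x, by omega⟩
  · rintro ⟨hT, hne, u, hu1, hu2, hu3⟩
    refine ⟨u, hu1, S.filter (fun x => t+i+1 ≤ x.val), ?_, ?_⟩
    · intro x hx
      rw [Finset.mem_filter] at hx
      rw [Rf, Finset.mem_filter]
      exact ⟨Finset.mem_univ x, hx.2⟩
    · ext x
      rw [Finset.mem_union, Finset.mem_erase, Finset.mem_filter, Finset.mem_filter]
      constructor
      · rintro (⟨hxu, _, hxlt⟩ | hx)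
        · rcases lt_or_ge x.val t with h1 | h1
          · exact hu3 x h1 hxu
          · exact hT x h1 hxlt
        · exact hx.1
      · intro hxS
        rcases lt_or_ge x.val (t+i) with h1 | h1
        · exact Or.inl ⟨fun h => hu2 (h ▸ hxS), Finset.mem_univ x, h1⟩
        · have := hne x hxS
          exact Or.inr ⟨hxS, by omega⟩

lemma card_Rf (n t i : ℕ) (h : t+i+1 ≤ n) : (Rf n t i).card = n - t - i - 1 := by
  have he : Rf n t i = Finset.univ \ (Finset.univ.filter (fun x : Fin n => x.val < t+i+1)) := by
    ext x; simp [Rf, not_lt]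
  rw [he, Finset.card_sdiff_of_subset (Finset.subset_univ _), card_pre n (t+i+1) h]
  simp; omega


lemma sum_union_powerset (n t i : ℕ) (g : ℕ → ℕ) (P : Finset (Fin n))
    (hP : ∀ x ∈ P, x.val < t+i+1) :
    ∑ S ∈ (Rf n t i).powerset.image (fun F => P ∪ F), g S.card
      = ∑ j ∈ Finset.range ((Rf n t i).card + 1), ((Rf n t i).card.choose j) * g (P.card + j) := by
  have hdisj : ∀ F ∈ (Rf n t i).powerset, Disjoint P F := by
    intro F hF
    rw [Finset.mem_powerset] at hF
    rw [Finset.disjoint_left]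
    intro x hxP hxF
    have := hF hxF
    rw [Rf, Finset.mem_filter] at this
    have := hP x hxP
    omega
  have hfilter : ∀ F ∈ (Rf n t i).powerset, (P ∪ F).filter (fun x => t+i+1 ≤ x.val) = F := by
    intro F hF
    rw [Finset.mem_powerset] at hF
    ext x
    rw [Finset.mem_filter, Finset.mem_union]
    constructor
    · rintro ⟨hx1 | hx1, hx2⟩
      · have := hP x hx1; omega
      · exact hx1
    · intro hx
      have := hF hx
      rw [Rf, Finset.mem_filter] at this
      exact ⟨Or.inr hx, this.2⟩
  rw [Finset.sum_image (fun F hF G hG h => by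
    rw [← hfilter F hF, ← hfilter G hG, h])]
  have hcard : ∀ F ∈ (Rf n t i).powerset, (P ∪ F).card = P.card + F.card := by
    intro F hF
    exact Finset.card_union_of_disjoint (hdisj F hF)
  rw [Finset.sum_congr rfl (fun F hF => by rw [hcard F hF])]
  rw [Finset.sum_powerset (Rf n t i) (fun F => g (P.card + F.card))]
  apply Finset.sum_congr rfl
  intro j hj
  rw [Finset.mem_range] at hj
  have : ∑ F ∈ Finset.powersetCard j (Rf n t i), g (P.card + F.card)
      = ∑ F ∈ Finset.powersetCard j (Rf n t i), g (P.card + j) := by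
    apply Finset.sum_congr rfl
    intro F hF
    rw [(Finset.mem_powersetCard.mp hF).2]
  rw [this, Finset.sum_const, Finset.card_powersetCard, smul_eq_mul]

lemma reflect_sum (m a s : ℕ) (h : a = s + m) (g : ℕ → ℕ) :
    ∑ j ∈ Finset.range (m+1), (m.choose j) * g (a - j)
      = ∑ j ∈ Finset.range (m+1), (m.choose j) * g (s + j) := by
  rw [← Finset.sum_range_reflect (fun j => (m.choose j) * g (s+j)) (m+1)]
  apply Finset.sum_congr rfl
  intro j hj
  rw [Finset.mem_range] at hj
  have h1 : m+1-1-j = m - j := by omega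
  have h2 : s + (m - j) = a - j := by omega
  rw [h1, h2, Nat.choose_symm (by omega : j ≤ m)]

section FFF
variable (n t i : ℕ)

lemma Y_subset_W (ht : 2 ≤ t) (hi : 1 ≤ i) (hn : t + i + 1 ≤ n) :
    Yset n t i ⊆ upset n (Hfam n t i) := by
  intro S hS
  rw [mem_Yset] at hS
  obtain ⟨hT, hne, u, hu1, hu2, hu3⟩ := hS
  rw [mem_W_iff n t i ht hi (by omega)]
  right
  refine ⟨hT, ?_⟩
  calc ((Finset.univ.filter (fun x : Fin n => x.val < t)) \ S).card ≤ ({u} : Finset (Fin n)).card := by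
        apply Finset.card_le_card
        intro x hx
        rw [Finset.mem_sdiff, Finset.mem_filter] at hx
        rw [Finset.mem_singleton]
        by_contra hxu
        exact hx.2 (hu3 x hx.1.2 hxu)
    _ = 1 := Finset.card_singleton u

lemma X_disj_W (ht : 2 ≤ t) (hi : 1 ≤ i) (hn : t + i + 1 ≤ n) (e : Fin n) (he : e.val = t+i) :
    Disjoint (Xset n t i e) (upset n (Hfam n t i)) := by
  rw [Finset.disjoint_left]
  intro S hSX hSW
  rw [mem_Xset n t i e he] at hSX
  obtain ⟨heS, hU, hmid⟩ := hSX
  rw [mem_W_iff n t i ht hi (by omega)] at hSW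
  rcases hSW with ⟨_, x, hxS, hx1, hx2⟩ | ⟨hT, _⟩
  · exact hmid x hxS ⟨hx1, hx2⟩
  · have hx0 : (⟨t, by omega⟩ : Fin n) ∈ S := hT _ (by simp) (by simp; omega)
    exact hmid _ hx0 (by constructor <;> simp <;> omega)

lemma W_succ_eq (ht : 2 ≤ t) (hi : 1 ≤ i) (hn : t + i + 1 ≤ n) (e : Fin n) (he : e.val = t+i) :
    upset n (Hfam n t (i+1)) = (upset n (Hfam n t i) \ Yset n t i) ∪ Xset n t i e := by
  ext S
  rw [Finset.mem_union, Finset.mem_sdiff, mem_W_iff n t (i+1) ht (by omega) (by omega),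
    mem_W_iff n t i ht hi (by omega), mem_Xset n t i e he, mem_Yset]
  constructor
  · rintro (⟨hU, x, hxS, hx1, hx2⟩ | ⟨hT, hcard⟩)
    · rcases lt_or_ge x.val (t+i) with hlt | hge
      · -- A_i holds, and Y fails since all of pre t in S
        left
        refine ⟨Or.inl ⟨hU, x, hxS, hx1, hlt⟩, ?_⟩
        rintro ⟨_, _, u, hu1, hu2, _⟩
        exact hu2 (hU u hu1)
      · -- x = e
        have hxe : x = e := Fin.ext (by omega)
        subst hxe
        by_cases hmid : ∃ y ∈ S, t ≤ y.val ∧ y.val < t + i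
        · left
          obtain ⟨y, hy⟩ := hmid
          refine ⟨Or.inl ⟨hU, y, hy⟩, ?_⟩
          rintro ⟨_, _, u, hu1, hu2, _⟩
          exact hu2 (hU u hu1)
        · right
          push_neg at hmid
          exact ⟨hxS, hU, fun y hyS hy => not_lt.mpr (hmid y hyS hy.1) hy.2⟩
    · -- B_{i+1}: e ∈ S, so not in Y; B_i holds
      left
      have heS : e ∈ S := hT e (by omega) (by omega)
      refine ⟨Or.inr ⟨fun x h1 h2 => hT x h1 (by omega), hcard⟩, ?_⟩
      rintro ⟨_, hne, _⟩
      exact hne e heS he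
  · rintro (⟨⟨hU, x, hxS, hx1, hx2⟩ | ⟨hT, hcard⟩, hnY⟩ | ⟨heS, hU, hmid⟩)
    · exact Or.inl ⟨hU, x, hxS, hx1, by omega⟩
    · -- B_i, not Y
      by_cases hUS : (Finset.univ.filter (fun x : Fin n => x.val < t)) \ S = ∅
      · -- pre t ⊆ S : A_{i+1}
        left
        have hUsub : ∀ y : Fin n, y.val < t → y ∈ S := by
          intro y hy
          by_contra hyS
          have hmem : y ∈ (Finset.univ.filter (fun x : Fin n => x.val < t)) \ S := by
            rw [Finset.mem_sdiff, Finset.mem_filter]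
            exact ⟨⟨Finset.mem_univ y, hy⟩, hyS⟩
          rw [hUS] at hmem
          exact absurd hmem (Finset.notMem_empty y)
        refine ⟨hUsub, ⟨t, by omega⟩, hT _ (by simp) (by simp; omega), by simp, by simp⟩
      · -- D = {u}; show e ∈ S else S ∈ Y
        obtain ⟨u, hu⟩ := Finset.nonempty_iff_ne_empty.mpr hUS
        have hu' := hu
        rw [Finset.mem_sdiff, Finset.mem_filter] at hu'
        have hDu : (Finset.univ.filter (fun x : Fin n => x.val < t)) \ S = {u} := by
          apply Finset.eq_singleton_iff_unique_mem.mpr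
          refine ⟨hu, ?_⟩
          intro v hv
          by_contra hvu
          have h2 : 2 ≤ ((Finset.univ.filter (fun x : Fin n => x.val < t)) \ S).card := by
            rw [← Finset.card_pair hvu]
            apply Finset.card_le_card
            intro w hw
            rw [Finset.mem_insert, Finset.mem_singleton] at hw
            rcases hw with rfl | rfl
            · exact hv
            · exact hu
          omega
        have hu3 : ∀ x : Fin n, x.val < t → x ≠ u → x ∈ S := by
          intro x hx hxu
          by_contra hxS
          have hmem : x ∈ (Finset.univ.filter (fun y : Fin n => y.val < t)) \ S := by
            rw [Finset.mem_sdiff, Finset.mem_filter]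
            exact ⟨⟨Finset.mem_univ x, hx⟩, hxS⟩
          rw [hDu, Finset.mem_singleton] at hmem
          exact hxu hmem
        have heS : e ∈ S := by
          by_contra heS
          apply hnY
          refine ⟨hT, ?_, u, hu'.1.2, hu'.2, hu3⟩
          intro x hxS hxval
          have : x = e := Fin.ext (by omega)
          exact heS (this ▸ hxS)
        right
        refine ⟨?_, hcard⟩
        intro x h1 h2
        rcases lt_or_ge x.val (t+i) with h3 | h3
        · exact hT x h1 h3
        · have : x = e := Fin.ext (by omega)
          subst this
          exact heS
    · -- X ⊆ A_{i+1}
      exact Or.inl ⟨hU, e, heS, by omega, by omega⟩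

end FFF


lemma sum_Xset_eq (n t i : ℕ) (ht : 2 ≤ t) (hi : 1 ≤ i) (hn : t + i + 1 ≤ n)
    (e : Fin n) (he : e.val = t+i) :
    ∑ S ∈ Xset n t i e, Btilde (n - S.card) = Phi i (n-t-i-1) := by
  have hP : ∀ x ∈ insert e (Finset.univ.filter (fun x : Fin n => x.val < t)), x.val < t+i+1 := by
    intro x hx
    rw [Finset.mem_insert] at hx
    rcases hx with rfl | hx
    · omega
    · rw [Finset.mem_filter] at hx
      omega
  have hcardP : (insert e (Finset.univ.filter (fun x : Fin n => x.val < t))).card = t+1 := by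
    rw [Finset.card_insert_of_notMem
      (by simp only [Finset.mem_filter, Finset.mem_univ, true_and, he]; omega),
      card_pre n t (by omega)]
  have h := sum_union_powerset n t i (fun c => Btilde (n - c)) _ hP
  rw [card_Rf n t i hn, hcardP] at h
  calc ∑ S ∈ Xset n t i e, Btilde (n - S.card)
      = ∑ j ∈ Finset.range ((n-t-i-1)+1), ((n-t-i-1).choose j) * Btilde (n - (t+1+j)) := h
    _ = ∑ j ∈ Finset.range ((n-t-i-1)+1), ((n-t-i-1).choose j) * Btilde ((n-t-1) - j) := by
        refine Finset.sum_congr rfl (fun j hj => ?_)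
        rw [show n - (t+1+j) = n-t-1-j by omega]
    _ = ∑ j ∈ Finset.range ((n-t-i-1)+1), ((n-t-i-1).choose j) * Btilde (i + j) :=
        reflect_sum _ _ _ (by omega) _
    _ = Phi i (n-t-i-1) := rfl

lemma sum_Yset_eq (n t i : ℕ) (ht : 2 ≤ t) (hi : 1 ≤ i) (hn : t + i + 1 ≤ n) :
    ∑ S ∈ Yset n t i, Btilde (n - S.card) = t * Phi 2 (n-t-i-1) := by
  have hpd : (↑(Finset.univ.filter (fun x : Fin n => x.val < t)) :
      Set (Fin n)).PairwiseDisjoint (fun u => (Rf n t i).powerset.image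
        (fun F => ((Finset.univ.filter (fun x : Fin n => x.val < t+i)).erase u) ∪ F)) := by
    intro u hu v hv huv
    simp only [Finset.mem_coe, Finset.mem_filter] at hu hv
    rw [Function.onFun, Finset.disjoint_left]
    intro S hSu hSv
    obtain ⟨F, hF, rfl⟩ := Finset.mem_image.mp hSu
    obtain ⟨G, hG, hEq⟩ := Finset.mem_image.mp hSv
    rw [Finset.mem_powerset] at hF hG
    have hvmem : v ∈ ((Finset.univ.filter (fun x : Fin n => x.val < t+i)).erase u) ∪ F := by
      apply Finset.mem_union_left
      rw [Finset.mem_erase, Finset.mem_filter]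
      exact ⟨Ne.symm huv, Finset.mem_univ v, by omega⟩
    rw [← hEq, Finset.mem_union, Finset.mem_erase] at hvmem
    rcases hvmem with ⟨hv1, _⟩ | hv2
    · exact hv1 rfl
    · have := hG hv2
      rw [Rf, Finset.mem_filter] at this
      omega
  rw [Yset, Finset.sum_biUnion hpd]
  have hinner : ∀ u ∈ Finset.univ.filter (fun x : Fin n => x.val < t),
      (∑ S ∈ (Rf n t i).powerset.image
        (fun F => ((Finset.univ.filter (fun x : Fin n => x.val < t+i)).erase u) ∪ F),
        Btilde (n - S.card)) = Phi 2 (n-t-i-1) := by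
    intro u hu
    rw [Finset.mem_filter] at hu
    have hP : ∀ x ∈ (Finset.univ.filter (fun x : Fin n => x.val < t+i)).erase u,
        x.val < t+i+1 := by
      intro x hx
      rw [Finset.mem_erase, Finset.mem_filter] at hx
      omega
    have hcardP : ((Finset.univ.filter (fun x : Fin n => x.val < t+i)).erase u).card
        = t+i-1 := by
      rw [Finset.card_erase_of_mem (by rw [Finset.mem_filter]; exact ⟨Finset.mem_univ u, by omega⟩),
        card_pre n (t+i) (by omega)]
    have h := sum_union_powerset n t i (fun c => Btilde (n - c)) _ hP
    rw [card_Rf n t i hn, hcardP] at h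
    calc (∑ S ∈ (Rf n t i).powerset.image
          (fun F => ((Finset.univ.filter (fun x : Fin n => x.val < t+i)).erase u) ∪ F),
          Btilde (n - S.card))
        = ∑ j ∈ Finset.range ((n-t-i-1)+1), ((n-t-i-1).choose j) * Btilde (n - (t+i-1+j)) := h
      _ = ∑ j ∈ Finset.range ((n-t-i-1)+1), ((n-t-i-1).choose j) * Btilde ((n-t-i+1) - j) := by
          refine Finset.sum_congr rfl (fun j hj => ?_)
          rw [show n - (t+i-1+j) = n-t-i+1-j by omega]
      _ = ∑ j ∈ Finset.range ((n-t-i-1)+1), ((n-t-i-1).choose j) * Btilde (2 + j) :=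
          reflect_sum _ _ _ (by omega) _
      _ = Phi 2 (n-t-i-1) := rfl
  rw [Finset.sum_congr rfl hinner, Finset.sum_const, card_pre n t (by omega), smul_eq_mul]

lemma key_identity (n t i : ℕ) (ht : 2 ≤ t) (hi : 1 ≤ i) (hn : t + i + 1 ≤ n) :
    nu n t (i+1) + t * Phi 2 (n-t-i-1) = nu n t i + Phi i (n-t-i-1) := by
  obtain ⟨e, he⟩ : ∃ e : Fin n, e.val = t+i := ⟨⟨t+i, by omega⟩, rfl⟩
  have hW := W_succ_eq n t i ht hi hn e he
  have hXW := X_disj_W n t i ht hi hn e he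
  have hYW := Y_subset_W n t i ht hi hn
  have hdisj : Disjoint (upset n (Hfam n t i) \ Yset n t i) (Xset n t i e) :=
    (hXW.symm).mono_left Finset.sdiff_subset
  have hsd : (∑ S ∈ upset n (Hfam n t i) \ Yset n t i, Btilde (n - S.card))
      + ∑ S ∈ Yset n t i, Btilde (n - S.card)
      = ∑ S ∈ upset n (Hfam n t i), Btilde (n - S.card) := Finset.sum_sdiff hYW
  have hX := sum_Xset_eq n t i ht hi hn e he
  have hY := sum_Yset_eq n t i ht hi hn
  unfold nu
  rw [hW, Finset.sum_union hdisj, hX, ← hY]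
  omega

lemma nu_step (n t i : ℕ) (ht : 2 ≤ t) (hi : 2 ≤ i) (hin : i ≤ n - t - 3)
    (hlt : nu n t i < nu n t (i+1)) : nu n t (i+1) < nu n t (i+2) := by
  have hn5 : t + 5 ≤ n := by omega
  have hin' : t + i + 3 ≤ n := by omega
  have k1 := key_identity n t i ht (by omega) (by omega)
  have k2 := key_identity n t (i+1) ht (by omega) (by omega)
  rw [show n-t-i-1 = (n-t-i-2)+1 by omega] at k1
  rw [show n-t-(i+1)-1 = n-t-i-2 by omega] at k2
  simp only [show i+1+1 = i+2 from rfl] at k2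
  set m := n - t - i - 2 with hm
  have h1 : t * Phi 2 (m+1) < Phi i (m+1) := by omega
  rw [phi_succ, phi_succ] at h1
  set A := Phi i m
  set A' := Phi (i+1) m
  set B := Phi 2 m
  set C := Phi 3 m
  have mono1 : A ≤ A' := phi_mono i m (by omega)
  have mono2 : B ≤ C := phi_mono 2 m (by omega)
  have hB : 0 < B := phi_pos m
  have hBC : 0 < B + C := by omega
  have step1 : t*(B+C)*B < (A+A')*B := by
    apply Nat.mul_lt_mul_of_lt_of_le h1 (le_refl B) hB
  have step2 : (A+A')*B ≤ A'*(B+C) := by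
    calc (A+A')*B = A*B + A'*B := by ring
      _ ≤ A'*C + A'*B := by
          exact Nat.add_le_add_right (Nat.mul_le_mul mono1 mono2) _
      _ = A'*(B+C) := by ring
  have step3 : (t*B)*(B+C) < A'*(B+C) := by
    calc (t*B)*(B+C) = t*(B+C)*B := by ring
      _ < (A+A')*B := step1
      _ ≤ A'*(B+C) := step2
  have h2 : t * B < A' := by
    by_contra hcon
    push_neg at hcon
    exact absurd (Nat.mul_le_mul_right (B+C) hcon) (not_le.mpr step3)
  omega

end Aux

/-- The sequence ν_i has no internal strict local maximum,
hence the maximum is attained at i = 2 or i = n - t - 1. -/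
theorem nu_max_at_endpoints (n t : ℕ) (ht : 2 ≤ t) (hn : t + 4 ≤ n) :
    (∀ i : ℕ, 2 ≤ i → i ≤ n - t - 3 →
        nu n t i < nu n t (i + 1) → nu n t (i + 1) < nu n t (i + 2)) ∧
    (Finset.Icc 2 (n - t - 1)).sup (fun i => nu n t i) = max (nu n t 2) (nu n t (n - t - 1)) := by
  have P : ∀ i : ℕ, 2 ≤ i → i ≤ n - t - 3 →
      nu n t i < nu n t (i + 1) → nu n t (i + 1) < nu n t (i + 2) :=
    fun i h1 h2 h3 => nu_step n t i ht h1 h2 h3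
  refine ⟨P, ?_⟩
  set L := n - t - 1 with hL
  have hL3 : 3 ≤ L := by omega
  have up : ∀ j, 2 ≤ j → j + 1 ≤ L → nu n t j < nu n t (j+1) →
      ∀ k, j ≤ k → k + 1 ≤ L → nu n t k < nu n t (k+1) := by
    intro j hj1 hj2 hj3 k hk1
    induction k, hk1 using Nat.le_induction with
    | base => intro _; exact hj3
    | succ k hk ih =>
        intro hk2
        have hik := ih (by omega)
        have hP := P k (by omega) (by omega) hik
        exact hP
  have down : ∀ i, 2 ≤ i → (∀ j, 2 ≤ j → j < i → ¬ nu n t j < nu n t (j+1)) →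
      nu n t i ≤ nu n t 2 := by
    intro i hi1
    induction i, hi1 using Nat.le_induction with
    | base => intro _; exact le_rfl
    | succ i hi ih =>
        intro hno
        have h1 : ¬ nu n t i < nu n t (i+1) := hno i (by omega) (by omega)
        have h2 : nu n t i ≤ nu n t 2 := ih (fun j a b => hno j a (by omega))
        omega
  have upchain : ∀ j, 2 ≤ j → j + 1 ≤ L → nu n t j < nu n t (j+1) →
      ∀ i, j < i → i ≤ L → nu n t i ≤ nu n t L := by
    intro j hj1 hj2 hj3 i hji hiL
    have aux : ∀ d, i + d ≤ L → nu n t i ≤ nu n t (i + d) := by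
      intro d
      induction d with
      | zero => intro _; simp
      | succ d ihd =>
          intro hdL
          rw [show i + (d+1) = i+d+1 by omega] at hdL ⊢
          have h1 := ihd (by omega)
          have h2 : nu n t (i+d) < nu n t (i+d+1) :=
            up j hj1 hj2 hj3 (i+d) (by omega) (by omega)
          omega
    have := aux (L - i) (by omega)
    rwa [show i + (L - i) = L by omega] at this
  apply le_antisymm
  · apply Finset.sup_le
    intro i hi
    rw [Finset.mem_Icc] at hi
    by_cases hinc : ∃ j, 2 ≤ j ∧ j < i ∧ nu n t j < nu n t (j+1)
    · obtain ⟨j, hj1, hj2, hj3⟩ := hinc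
      have hle : nu n t i ≤ nu n t L := upchain j hj1 (by omega) hj3 i hj2 hi.2
      exact le_trans hle (le_max_right _ _)
    · push_neg at hinc
      exact le_trans (down i hi.1 (fun j a b => not_lt.mpr (hinc j a b))) (le_max_left _ _)
  · apply max_le
    · apply Finset.le_sup (f := fun i => nu n t i)
      rw [Finset.mem_Icc]; omega
    · apply Finset.le_sup (f := fun i => nu n t i)
      rw [Finset.mem_Icc]; omega
end

section
/- For every t ≥ 1 and every t-intersecting family A ⊆ Π(n), there exists a t-intersecting family A' ⊆ Π(n) with |A'| = |A| such that every two members p, q of A' have at least t common singleton blocks, i.e. |f(p) ∩ f(q)| ≥ t. -/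
open Finset

section CompressionProof

variable {n : ℕ}

lemma SetPartition.parts_inj {p q : SetPartition n} (h : p.parts = q.parts) : p = q := by
  cases p; cases q; simp_all

lemma parts_disj {p : SetPartition n} {b b' : Finset (Fin n)} (hb : b ∈ p.parts)
    (hb' : b' ∈ p.parts) (hne : b ≠ b') : Disjoint b b' :=
  Finset.disjoint_left.mpr fun x hx hx' => hne (p.eq_of_mem_parts hb hb' hx hx')

lemma i_notmem_of_ne_part {p : SetPartition n} {i : Fin n} {b : Finset (Fin n)}
    (hb : b ∈ p.parts) (hne : b ≠ p.part i) : i ∉ b :=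
  fun hib => hne (p.part_eq_of_mem hb hib).symm

/-- The parts obtained from `p` by splitting off `i` as a singleton. -/
def cparts (i : Fin n) (p : SetPartition n) : Finset (Finset (Fin n)) :=
  insert {i} (insert ((p.part i).erase i) (p.parts.erase (p.part i)))

lemma mem_cparts {i : Fin n} {p : SetPartition n} {b : Finset (Fin n)} :
    b ∈ cparts i p ↔ b = {i} ∨ b = (p.part i).erase i ∨ (b ∈ p.parts ∧ b ≠ p.part i) := by
  simp [cparts, Finset.mem_insert, Finset.mem_erase, and_comm]

/-- The compression: if `j` lies in the block of `i` (and `i ≠ j`), split off `i`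
as a singleton block. -/
def cpartition (i j : Fin n) (p : SetPartition n) : SetPartition n :=
  if h : i ≠ j ∧ j ∈ p.part i then
    { parts := cparts i p
      supIndep := by
        rw [Finset.supIndep_iff_pairwiseDisjoint]
        intro a ha b hb hab
        simp only [Finset.mem_coe, mem_cparts] at ha hb
        have hpi : p.part i ∈ p.parts := p.part_mem.mpr (Finset.mem_univ i)
        have himem : i ∈ p.part i := p.mem_part (Finset.mem_univ i)
        simp only [Function.onFun, id]
        rcases ha with rfl | rfl | ⟨ha, hane⟩ <;> rcases hb with rfl | rfl | ⟨hb, hbne⟩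
        · exact absurd rfl hab
        · exact Finset.disjoint_left.mpr (by simp +contextual)
        · exact Finset.disjoint_singleton_left.mpr (i_notmem_of_ne_part hb hbne)
        · exact Finset.disjoint_left.mpr (by simp +contextual)
        · exact absurd rfl hab
        · exact (parts_disj hpi hb (Ne.symm hbne)).mono_left (Finset.erase_subset _ _)
        · exact Finset.disjoint_singleton_right.mpr (i_notmem_of_ne_part ha hane)
        · exact (parts_disj ha hpi hane).mono_right (Finset.erase_subset _ _)
        · exact parts_disj ha hb hab
      sup_parts := by
        have hpi : p.part i ∈ p.parts := p.part_mem.mpr (Finset.mem_univ i)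
        have himem : i ∈ p.part i := p.mem_part (Finset.mem_univ i)
        have h2 : insert (p.part i) (p.parts.erase (p.part i)) = p.parts :=
          Finset.insert_erase hpi
        have h3 := p.sup_parts
        rw [← h2, Finset.sup_insert] at h3
        rw [cparts, Finset.sup_insert, Finset.sup_insert]
        ext x
        simp only [id, Finset.sup_eq_union, Finset.mem_union, Finset.mem_singleton,
          Finset.mem_erase, Finset.mem_univ, iff_true]
        have hx : x ∈ (Finset.univ : Finset (Fin n)) := Finset.mem_univ x
        rw [← h3] at hx
        simp only [id, Finset.sup_eq_union, Finset.mem_union] at hx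
        by_cases hxi : x = i
        · exact Or.inl hxi
        · rcases hx with hx | hx
          · exact Or.inr (Or.inl ⟨hxi, hx⟩)
          · exact Or.inr (Or.inr hx)
      bot_notMem := by
        intro hbot
        rw [mem_cparts] at hbot
        have himem : i ∈ p.part i := p.mem_part (Finset.mem_univ i)
        rcases hbot with hb | hb | ⟨hb, _⟩
        · exact absurd hb.symm (Finset.singleton_ne_empty i)
        · have : j ∈ ((p.part i).erase i) := Finset.mem_erase.mpr ⟨Ne.symm h.1, h.2⟩
          rw [← hb] at this
          exact absurd this (Finset.notMem_empty j)
        · exact p.bot_notMem hb }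
  else p

lemma cpartition_parts {i j : Fin n} {p : SetPartition n} (h : i ≠ j ∧ j ∈ p.part i) :
    (cpartition i j p).parts = cparts i p := by
  rw [cpartition, dif_pos h]

lemma cpartition_of_not {i j : Fin n} {p : SetPartition n} (h : ¬(i ≠ j ∧ j ∈ p.part i)) :
    cpartition i j p = p := dif_neg h

lemma singleton_i_notmem {i j : Fin n} {p : SetPartition n} (h : i ≠ j ∧ j ∈ p.part i) :
    ({i} : Finset (Fin n)) ∉ p.parts := by
  intro hmem
  have := p.part_eq_of_mem hmem (Finset.mem_singleton_self i)
  rw [this] at h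
  exact h.1 (Finset.mem_singleton.mp h.2).symm

lemma erase_i_notmem {i j : Fin n} {p : SetPartition n} (h : i ≠ j ∧ j ∈ p.part i) :
    (p.part i).erase i ∉ p.parts := by
  intro hmem
  have hj : j ∈ (p.part i).erase i := Finset.mem_erase.mpr ⟨Ne.symm h.1, h.2⟩
  have h1 : p.part j = (p.part i).erase i := p.part_eq_of_mem hmem hj
  have h2 : p.part j = p.part i := p.part_eq_of_mem (p.part_mem.mpr (Finset.mem_univ i)) h.2
  have := p.mem_part (Finset.mem_univ i)
  rw [h2] at h1
  rw [h1] at this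
  exact (Finset.mem_erase.mp this).1 rfl

lemma singleton_ne_erase {i : Fin n} {p : SetPartition n} :
    ({i} : Finset (Fin n)) ≠ (p.part i).erase i := by
  intro heq
  have : i ∈ ({i} : Finset (Fin n)) := Finset.mem_singleton_self i
  rw [heq] at this
  exact (Finset.mem_erase.mp this).1 rfl

lemma cpartition_parts_card {i j : Fin n} {p : SetPartition n} (h : i ≠ j ∧ j ∈ p.part i) :
    (cpartition i j p).parts.card = p.parts.card + 1 := by
  have hpi : p.part i ∈ p.parts := p.part_mem.mpr (Finset.mem_univ i)
  have h1 : ({i} : Finset (Fin n)) ∉ insert ((p.part i).erase i) (p.parts.erase (p.part i)) := by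
    simp only [Finset.mem_insert, Finset.mem_erase]
    push_neg
    exact ⟨singleton_ne_erase, fun _ hc => absurd hc (singleton_i_notmem h)⟩
  have h2 : (p.part i).erase i ∉ p.parts.erase (p.part i) :=
    fun hmem => erase_i_notmem h (Finset.mem_of_mem_erase hmem)
  rw [cpartition_parts h, cparts, Finset.card_insert_of_notMem h1,
    Finset.card_insert_of_notMem h2, Finset.card_erase_of_mem hpi]
  have : 1 ≤ p.parts.card := Finset.card_pos.mpr ⟨_, hpi⟩
  omega

lemma parts_card_lt {i j : Fin n} {p : SetPartition n} (h : i ≠ j ∧ j ∈ p.part i) :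
    p.parts.card < n := by
  have hsum : ∑ b ∈ p.parts, b.card = n := by
    rw [p.sum_card_parts, Finset.card_univ, Fintype.card_fin]
  have h1 : ∀ b ∈ p.parts, 1 ≤ b.card :=
    fun b hb => Finset.card_pos.mpr (p.nonempty_of_mem_parts hb)
  have h2 : ∃ b ∈ p.parts, 1 < b.card := by
    refine ⟨p.part i, p.part_mem.mpr (Finset.mem_univ i), Finset.one_lt_card.mpr
      ⟨i, p.mem_part (Finset.mem_univ i), j, h.2, h.1⟩⟩
  calc p.parts.card = ∑ _b ∈ p.parts, 1 := by simp
  _ < ∑ b ∈ p.parts, b.card := Finset.sum_lt_sum h1 h2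
  _ = n := hsum

lemma cpartition_injOn {i j : Fin n} {p q : SetPartition n} (hp : i ≠ j ∧ j ∈ p.part i)
    (hq : i ≠ j ∧ j ∈ q.part i) (heq : cpartition i j p = cpartition i j q) : p = q := by
  have hparts : cparts i p = cparts i q := by
    rw [← cpartition_parts hp, ← cpartition_parts hq, heq]
  -- First: p.part i = q.part i
  have hBpq : p.part i = q.part i := by
    have hmem : (p.part i).erase i ∈ cparts i q := by
      rw [← hparts, mem_cparts]; exact Or.inr (Or.inl rfl)
    rw [mem_cparts] at hmem
    have hji : j ∈ (p.part i).erase i := Finset.mem_erase.mpr ⟨Ne.symm hp.1, hp.2⟩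
    rcases hmem with hc | hc | ⟨hc, _⟩
    · rw [hc] at hji; exact absurd (Finset.mem_singleton.mp hji) (Ne.symm hp.1)
    · have := congrArg (insert i) hc
      rwa [Finset.insert_erase (p.mem_part (Finset.mem_univ i)),
        Finset.insert_erase (q.mem_part (Finset.mem_univ i))] at this
    · exfalso
      have h1 : q.part j = (p.part i).erase i := q.part_eq_of_mem hc hji
      have h2 : q.part j = q.part i := q.part_eq_of_mem (q.part_mem.mpr (Finset.mem_univ i)) hq.2
      have : i ∈ (p.part i).erase i := by
        rw [← h1, h2]; exact q.mem_part (Finset.mem_univ i)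
      exact (Finset.mem_erase.mp this).1 rfl
  -- parts inclusion, by symmetry
  have key : ∀ p q : SetPartition n, (i ≠ j ∧ j ∈ p.part i) → (i ≠ j ∧ j ∈ q.part i) →
      cparts i p = cparts i q → p.part i = q.part i → p.parts ⊆ q.parts := by
    intro p q hp hq hparts hB b hb
    by_cases hbB : b = p.part i
    · rw [hbB, hB]; exact q.part_mem.mpr (Finset.mem_univ i)
    · have hbc : b ∈ cparts i q := by
        rw [← hparts, mem_cparts]; exact Or.inr (Or.inr ⟨hb, hbB⟩)
      rw [mem_cparts] at hbc
      have hib : i ∉ b := i_notmem_of_ne_part hb hbB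
      rcases hbc with hc | hc | ⟨hc, _⟩
      · exact absurd (hc ▸ Finset.mem_singleton_self i) hib
      · exfalso
        have hjb : j ∈ b := by
          rw [hc, ← hB]; exact Finset.mem_erase.mpr ⟨Ne.symm hp.1, hp.2⟩
        have h1 : p.part j = b := p.part_eq_of_mem hb hjb
        have h2 : p.part j = p.part i := p.part_eq_of_mem (p.part_mem.mpr (Finset.mem_univ i)) hp.2
        exact hbB (h1 ▸ h2 ▸ rfl)
      · exact hc
  exact SetPartition.parts_inj (Finset.Subset.antisymm
    (key p q hp hq hparts hBpq) (key q p hq hp hparts.symm hBpq.symm))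

/-- Cross intersection lemma. -/
lemma cross_subset {i j : Fin n} {p q : SetPartition n} (hp : i ≠ j ∧ j ∈ p.part i) :
    p.parts ∩ (cpartition i j q).parts ⊆ (cpartition i j p).parts ∩ q.parts := by
  intro b hb
  rw [Finset.mem_inter] at hb
  obtain ⟨hb1, hb2⟩ := hb
  have hib : i ∉ b := by
    intro hib
    have hbBp : b = p.part i := (p.part_eq_of_mem hb1 hib).symm
    have hjb : j ∈ b := hbBp ▸ hp.2
    by_cases hq : i ≠ j ∧ j ∈ q.part i
    · rw [cpartition_parts hq, mem_cparts] at hb2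
      rcases hb2 with hc | hc | ⟨hc, hcne⟩
      · exact hp.1 (Finset.mem_singleton.mp (hc ▸ hjb)).symm
      · exact (Finset.mem_erase.mp (hc ▸ hib)).1 rfl
      · exact hcne (q.part_eq_of_mem hc hib).symm
    · rw [cpartition_of_not hq] at hb2
      exact hq ⟨hp.1, (q.part_eq_of_mem hb2 hib) ▸ hjb⟩
  rw [Finset.mem_inter]
  constructor
  · rw [cpartition_parts hp, mem_cparts]
    exact Or.inr (Or.inr ⟨hb1, fun hc => hib (hc ▸ p.mem_part (Finset.mem_univ i))⟩)
  · by_cases hq : i ≠ j ∧ j ∈ q.part i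
    · rw [cpartition_parts hq, mem_cparts] at hb2
      rcases hb2 with hc | hc | ⟨hc, _⟩
      · exact absurd (hc ▸ Finset.mem_singleton_self i) hib
      · exfalso
        have hjb : j ∈ b := by
          rw [hc]; exact Finset.mem_erase.mpr ⟨Ne.symm hq.1, hq.2⟩
        have h1 : p.part j = b := p.part_eq_of_mem hb1 hjb
        have h2 : p.part j = p.part i := p.part_eq_of_mem (p.part_mem.mpr (Finset.mem_univ i)) hp.2
        rw [h2] at h1
        exact hib (h1 ▸ p.mem_part (Finset.mem_univ i))
      · exact hc
    · rwa [cpartition_of_not hq] at hb2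

/-- Both-compressed intersection lemma. -/
lemma both_card_le {i j : Fin n} {p q : SetPartition n} (hp : i ≠ j ∧ j ∈ p.part i)
    (hq : i ≠ j ∧ j ∈ q.part i) :
    (p.parts ∩ q.parts).card ≤ ((cpartition i j p).parts ∩ (cpartition i j q).parts).card := by
  set S := (p.parts ∩ q.parts).erase (p.part i) with hS
  have hsub : insert ({i} : Finset (Fin n)) S ⊆
      (cpartition i j p).parts ∩ (cpartition i j q).parts := by
    intro b hb
    rcases Finset.mem_insert.mp hb with rfl | hbS
    · rw [Finset.mem_inter, cpartition_parts hp, cpartition_parts hq, mem_cparts, mem_cparts]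
      exact ⟨Or.inl rfl, Or.inl rfl⟩
    · have hbne := (Finset.mem_erase.mp hbS).1
      have hbpq := Finset.mem_inter.mp (Finset.mem_of_mem_erase hbS)
      have hib : i ∉ b := i_notmem_of_ne_part hbpq.1 hbne
      rw [Finset.mem_inter, cpartition_parts hp, cpartition_parts hq, mem_cparts, mem_cparts]
      exact ⟨Or.inr (Or.inr ⟨hbpq.1, hbne⟩),
        Or.inr (Or.inr ⟨hbpq.2, fun hc => hib (hc ▸ q.mem_part (Finset.mem_univ i))⟩)⟩
  have hiS : ({i} : Finset (Fin n)) ∉ S :=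
    fun hmem => singleton_i_notmem hp (Finset.mem_inter.mp (Finset.mem_of_mem_erase hmem)).1
  calc (p.parts ∩ q.parts).card ≤ S.card + 1 := by
        rw [hS]
        by_cases hm : p.part i ∈ p.parts ∩ q.parts
        · exact le_of_eq (Finset.card_erase_add_one hm).symm
        · rw [Finset.erase_eq_of_notMem hm]; omega
  _ = (insert ({i} : Finset (Fin n)) S).card := (Finset.card_insert_of_notMem hiS).symm
  _ ≤ _ := Finset.card_le_card hsub

/-! ### Family-level compression -/

def IsTF (t : ℕ) (F : Finset (SetPartition n)) : Prop :=
  ∀ p ∈ F, ∀ q ∈ F, t ≤ (p.parts ∩ q.parts).card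

def gmap (i j : Fin n) (F : Finset (SetPartition n)) (p : SetPartition n) : SetPartition n :=
  if cpartition i j p ∈ F then p else cpartition i j p

lemma cond_of_not_mem {i j : Fin n} {F : Finset (SetPartition n)} {p : SetPartition n}
    (hp : p ∈ F) (h : cpartition i j p ∉ F) : i ≠ j ∧ j ∈ p.part i := by
  by_contra hc
  rw [cpartition_of_not hc] at h
  exact h hp

lemma gmap_injOn {i j : Fin n} {F : Finset (SetPartition n)} :
    ∀ p ∈ F, ∀ q ∈ F, gmap i j F p = gmap i j F q → p = q := by
  intro p hp q hq h
  unfold gmap at h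
  split_ifs at h with h1 h2 h2
  · exact h
  · exact absurd (h ▸ hp) h2
  · exact absurd (h ▸ hq : cpartition i j p ∈ F) h1
  · exact cpartition_injOn (cond_of_not_mem hp h1) (cond_of_not_mem hq h2) h

lemma card_gmap_image {i j : Fin n} {F : Finset (SetPartition n)} :
    (F.image (gmap i j F)).card = F.card :=
  Finset.card_image_of_injOn fun p hp q hq h => gmap_injOn p hp q hq h

lemma isTF_gmap_image {t : ℕ} {i j : Fin n} {F : Finset (SetPartition n)} (hF : IsTF t F) :
    IsTF t (F.image (gmap i j F)) := by
  intro p' hp' q' hq'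
  obtain ⟨p, hp, rfl⟩ := Finset.mem_image.mp hp'
  obtain ⟨q, hq, rfl⟩ := Finset.mem_image.mp hq'
  unfold gmap
  split_ifs with h1 h2 h2
  · exact hF p hp q hq
  · have hcq := cond_of_not_mem hq h2
    calc t ≤ (q.parts ∩ (cpartition i j p).parts).card := hF q hq _ h1
    _ ≤ ((cpartition i j q).parts ∩ p.parts).card := Finset.card_le_card (cross_subset hcq)
    _ = (p.parts ∩ (cpartition i j q).parts).card := by rw [Finset.inter_comm]
  · have hcp := cond_of_not_mem hp h1
    calc t ≤ (p.parts ∩ (cpartition i j q).parts).card := hF p hp _ h2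
    _ ≤ ((cpartition i j p).parts ∩ q.parts).card := Finset.card_le_card (cross_subset hcp)
  · exact le_trans (hF p hp q hq)
      (both_card_le (cond_of_not_mem hp h1) (cond_of_not_mem hq h2))

def phiF {n : ℕ} (F : Finset (SetPartition n)) : ℕ := ∑ p ∈ F, (n - p.parts.card)

lemma phiF_gmap_lt {i j : Fin n} {F : Finset (SetPartition n)} {p₀ : SetPartition n}
    (hp₀ : p₀ ∈ F) (h₀ : cpartition i j p₀ ∉ F) : phiF (F.image (gmap i j F)) < phiF F := by
  rw [phiF, Finset.sum_image gmap_injOn]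
  apply Finset.sum_lt_sum
  · intro p hp
    unfold gmap
    split_ifs with h1
    · exact le_rfl
    · rw [cpartition_parts_card (cond_of_not_mem hp h1)]
      omega
  · refine ⟨p₀, hp₀, ?_⟩
    have hc := cond_of_not_mem hp₀ h₀
    unfold gmap
    rw [if_neg h₀, cpartition_parts_card hc]
    have := parts_card_lt hc
    omega

/-! ### Terminal families -/

lemma base_singletons {t : ℕ} {p q : SetPartition n}
    (hall : ∀ b ∈ p.parts ∩ q.parts, b.card = 1)
    (htle : t ≤ (p.parts ∩ q.parts).card) : t ≤ (fixedSet p ∩ fixedSet q).card := by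
  have hsub : p.parts ∩ q.parts ⊆
      (fixedSet p ∩ fixedSet q).image (fun x => ({x} : Finset (Fin n))) := by
    intro b hb
    obtain ⟨x, rfl⟩ := Finset.card_eq_one.mp (hall b hb)
    have hbp := (Finset.mem_inter.mp hb).1
    have hbq := (Finset.mem_inter.mp hb).2
    exact Finset.mem_image.mpr ⟨x, Finset.mem_inter.mpr
      ⟨Finset.mem_filter.mpr ⟨Finset.mem_univ x, hbp⟩,
       Finset.mem_filter.mpr ⟨Finset.mem_univ x, hbq⟩⟩, rfl⟩
  calc t ≤ (p.parts ∩ q.parts).card := htle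
  _ ≤ ((fixedSet p ∩ fixedSet q).image (fun x => ({x} : Finset (Fin n)))).card :=
      Finset.card_le_card hsub
  _ ≤ (fixedSet p ∩ fixedSet q).card := Finset.card_image_le

lemma fixed_inter_subset {i j : Fin n} {p q : SetPartition n} (hq : i ≠ j ∧ j ∈ q.part i)
    (hbp : q.part i ∈ p.parts) :
    fixedSet p ∩ fixedSet (cpartition i j q) ⊆ fixedSet p ∩ fixedSet q := by
  intro x hx
  obtain ⟨hx1, hx2⟩ := Finset.mem_inter.mp hx
  rw [fixedSet, Finset.mem_filter] at hx1 hx2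
  have hx1' := hx1.2
  rw [cpartition_parts hq, mem_cparts] at hx2
  rcases hx2.2 with hc | hc | ⟨hc, _⟩
  · exfalso
    have hxi : x = i := Finset.singleton_inj.mp hc
    subst hxi
    have h1 : p.part x = {x} := p.part_eq_of_mem hx1' (Finset.mem_singleton_self x)
    have h2 : p.part x = q.part x := p.part_eq_of_mem hbp (q.mem_part (Finset.mem_univ x))
    rw [h1] at h2
    rw [← h2] at hq
    exact hq.1 (Finset.mem_singleton.mp hq.2).symm
  · exfalso
    have hxmem : x ∈ q.part i := Finset.mem_of_mem_erase (hc ▸ Finset.mem_singleton_self x)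
    have hxi : x ≠ i := (Finset.mem_erase.mp (hc ▸ Finset.mem_singleton_self x)).1
    have heq : ({x} : Finset (Fin n)) = q.part i :=
      p.eq_of_mem_parts hx1' hbp (Finset.mem_singleton_self x) hxmem
    have : i ∈ ({x} : Finset (Fin n)) := heq ▸ q.mem_part (Finset.mem_univ i)
    exact hxi (Finset.mem_singleton.mp this).symm
  · exact Finset.mem_inter.mpr ⟨Finset.mem_filter.mpr ⟨Finset.mem_univ x, hx1'⟩,
      Finset.mem_filter.mpr ⟨Finset.mem_univ x, hc⟩⟩

lemma terminal_fixed {t : ℕ} {F : Finset (SetPartition n)} (hF : IsTF t F)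
    (hterm : ∀ p ∈ F, ∀ i j : Fin n, cpartition i j p ∈ F) :
    ∀ p ∈ F, ∀ q ∈ F, t ≤ (fixedSet p ∩ fixedSet q).card := by
  intro p hp
  suffices h : ∀ m : ℕ, ∀ q ∈ F, n - q.parts.card ≤ m → t ≤ (fixedSet p ∩ fixedSet q).card by
    intro q hq; exact h _ q hq le_rfl
  intro m
  induction m with
  | zero =>
    intro q hq hm
    by_cases hall : ∀ b ∈ p.parts ∩ q.parts, b.card = 1
    · exact base_singletons hall (hF p hp q hq)
    · exfalso
      push_neg at hall
      obtain ⟨b, hb, hbcard⟩ := hall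
      have hb2 : 1 < b.card := by
        have := Finset.card_pos.mpr (p.nonempty_of_mem_parts (Finset.mem_inter.mp hb).1)
        omega
      obtain ⟨i, hi, j, hj, hij⟩ := Finset.one_lt_card.mp hb2
      have hq' : q.part i = b := q.part_eq_of_mem (Finset.mem_inter.mp hb).2 hi
      have hcond : i ≠ j ∧ j ∈ q.part i := ⟨hij, hq' ▸ hj⟩
      have := parts_card_lt hcond
      omega
  | succ m ih =>
    intro q hq hm
    by_cases hall : ∀ b ∈ p.parts ∩ q.parts, b.card = 1
    · exact base_singletons hall (hF p hp q hq)
    · push_neg at hall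
      obtain ⟨b, hb, hbcard⟩ := hall
      have hb2 : 1 < b.card := by
        have := Finset.card_pos.mpr (p.nonempty_of_mem_parts (Finset.mem_inter.mp hb).1)
        omega
      obtain ⟨i, hi, j, hj, hij⟩ := Finset.one_lt_card.mp hb2
      have hq' : q.part i = b := q.part_eq_of_mem (Finset.mem_inter.mp hb).2 hi
      have hcond : i ≠ j ∧ j ∈ q.part i := ⟨hij, hq' ▸ hj⟩
      have hmem : cpartition i j q ∈ F := hterm q hq i j
      have hlt := parts_card_lt hcond
      have hmeas : n - (cpartition i j q).parts.card ≤ m := by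
        rw [cpartition_parts_card hcond]
        omega
      calc t ≤ (fixedSet p ∩ fixedSet (cpartition i j q)).card := ih _ hmem hmeas
      _ ≤ (fixedSet p ∩ fixedSet q).card :=
        Finset.card_le_card (fixed_inter_subset hcond (hq' ▸ (Finset.mem_inter.mp hb).1))

/-! ### Main induction -/

lemma exists_compressed (t : ℕ) : ∀ (m : ℕ) (F : Finset (SetPartition n)),
    phiF F ≤ m → IsTF t F →
    ∃ F' : Finset (SetPartition n), IsTF t F' ∧ F'.card = F.card ∧
      ∀ p ∈ F', ∀ q ∈ F', t ≤ (fixedSet p ∩ fixedSet q).card := by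
  intro m
  induction m with
  | zero =>
    intro F hphi hF
    have hterm : ∀ p ∈ F, ∀ i j : Fin n, cpartition i j p ∈ F := by
      intro p hp i j
      by_contra hc
      have hcond := cond_of_not_mem hp hc
      have h1 : n - p.parts.card ≤ phiF F :=
        Finset.single_le_sum (f := fun p : SetPartition n => n - p.parts.card)
          (fun _ _ => Nat.zero_le _) hp
      have := parts_card_lt hcond
      omega
    exact ⟨F, hF, rfl, terminal_fixed hF hterm⟩
  | succ m ih =>
    intro F hphi hF
    by_cases hterm : ∀ p ∈ F, ∀ i j : Fin n, cpartition i j p ∈ F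
    · exact ⟨F, hF, rfl, terminal_fixed hF hterm⟩
    · push_neg at hterm
      obtain ⟨p₀, hp₀, i, j, h₀⟩ := hterm
      have hlt := phiF_gmap_lt hp₀ h₀
      obtain ⟨F', h1, h2, h3⟩ := ih (F.image (gmap i j F)) (by omega) (isTF_gmap_image hF)
      exact ⟨F', h1, h2.trans card_gmap_image, h3⟩

end CompressionProof

/-- Compression — every t-intersecting family can be replaced by one of
the same size in which any two members share at least t common singleton blocks. -/
theorem compression_to_fixed_points (n t : ℕ) (ht : 1 ≤ t)
    (A : Set (SetPartition n)) (hA : IsTIntersecting n t A) :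
    ∃ A' : Set (SetPartition n), IsTIntersecting n t A' ∧ A'.ncard = A.ncard ∧
      ∀ p ∈ A', ∀ q ∈ A', t ≤ (fixedSet p ∩ fixedSet q).card := by
  have hfin : A.Finite := Set.toFinite A
  have hFt : IsTF t hfin.toFinset := by
    intro p hp q hq
    rw [Set.Finite.mem_toFinset] at hp hq
    exact hA p hp q hq
  obtain ⟨F', h1, h2, h3⟩ := exists_compressed t (phiF hfin.toFinset) hfin.toFinset le_rfl hFt
  refine ⟨↑F', ?_, ?_, ?_⟩
  · intro p hp q hq
    exact h1 p (Finset.mem_coe.mp hp) q (Finset.mem_coe.mp hq)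
  · rw [Set.ncard_coe_finset, h2, Set.ncard_eq_toFinset_card A hfin]
  · intro p hp q hq
    exact h3 p (Finset.mem_coe.mp hp) q (Finset.mem_coe.mp hq)
end

section
/- For every integer n ≥ 0, B̃(n) = e^{-1} · Σ_{i=0}^{∞} (i−1)^n / i!, with the convention 0^0 = 1 (so the i = 0 term is (−1)^n). -/
open Finset

section AuxDobinski

/-! ### Auxiliary material for the Dobinski-type formula -/

noncomputable def Tt (n : ℕ) : ℝ := ∑' i : ℕ, ((i : ℝ) - 1) ^ n / (Nat.factorial i)
noncomputable def Uu (n : ℕ) : ℝ := ∑' i : ℕ, (i : ℝ) ^ n / (Nat.factorial i)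


lemma summable_U (n : ℕ) : Summable (fun i : ℕ => (i : ℝ) ^ n / (Nat.factorial i)) := by
  induction n using Nat.strong_induction_on with
  | _ n ih =>
    cases n with
    | zero =>
      simpa using Real.summable_pow_div_factorial 1
    | succ m =>
      rw [← summable_nat_add_iff 1]
      have key : (fun i : ℕ => ((i + 1 : ℕ) : ℝ) ^ (m + 1) / (Nat.factorial (i + 1))) =
          fun i : ℕ => ∑ k ∈ range (m + 1), (m.choose k : ℝ) * ((i : ℝ) ^ k / (Nat.factorial i)) := by
        funext i
        have h1 : ((i + 1 : ℕ) : ℝ) ^ (m + 1) / (Nat.factorial (i + 1)) =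
            ((i : ℝ) + 1) ^ m / (Nat.factorial i) := by
          rw [Nat.factorial_succ]
          push_cast
          rw [pow_succ]
          rw [mul_comm ((i:ℝ)+1) (Nat.factorial i : ℝ)]
          rw [mul_div_mul_right _ _ (by positivity : (i:ℝ) + 1 ≠ 0)]
        rw [h1, add_pow, Finset.sum_div]
        refine Finset.sum_congr rfl fun k hk => ?_
        rw [one_pow, mul_one]
        ring
      rw [key]
      apply summable_sum
      intro k hk
      exact (ih k (by have := Finset.mem_range.mp hk; omega)).mul_left _

lemma summable_T (n : ℕ) : Summable (fun i : ℕ => ((i : ℝ) - 1) ^ n / (Nat.factorial i)) := by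
  rw [← summable_nat_add_iff 1]
  have : (fun i : ℕ => (((i + 1 : ℕ) : ℝ) - 1) ^ n / (Nat.factorial (i + 1))) =
      fun i : ℕ => (i : ℝ) ^ n / (Nat.factorial (i + 1)) := by
    funext i; push_cast; ring_nf
  rw [this]
  apply Summable.of_nonneg_of_le (fun i => by positivity)
    (fun i => ?_) (summable_U n)
  apply div_le_div_of_nonneg_left (by positivity) (by positivity)
  exact_mod_cast Nat.factorial_le (Nat.le_succ i)

lemma T_zero : Tt 0 = Real.exp 1 := by
  rw [Real.exp_eq_exp_ℝ, NormedSpace.exp_eq_tsum_div, Tt]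
  simp

lemma U_eq_T_add (n : ℕ) : Uu n = Tt (n + 1) + Tt n := by
  have h1 : ∀ i : ℕ, ((i : ℝ) - 1) ^ (n + 1) / (Nat.factorial i) =
      ((i : ℝ) - 1) ^ n * i / (Nat.factorial i) - ((i : ℝ) - 1) ^ n / (Nat.factorial i) := by
    intro i
    rw [pow_succ]
    ring
  have hsummul : Summable (fun i : ℕ => ((i : ℝ) - 1) ^ n * i / (Nat.factorial i)) := by
    have := (summable_T (n + 1)).add (summable_T n)
    apply this.congr
    intro i
    rw [h1 i]; ring
  have hmul : (∑' i : ℕ, ((i : ℝ) - 1) ^ n * i / (Nat.factorial i)) = Uu n := by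
    rw [Summable.tsum_eq_zero_add hsummul]
    simp only [Nat.cast_zero, mul_zero, zero_div, zero_add]
    rw [Uu]
    apply tsum_congr
    intro i
    have : (((i + 1 : ℕ) : ℝ) - 1) = (i : ℝ) := by push_cast; ring
    rw [this, Nat.factorial_succ]
    push_cast
    rw [mul_comm ((i:ℝ)+1) (Nat.factorial i : ℝ), mul_div_mul_right _ _ (by positivity : (i:ℝ) + 1 ≠ 0)]
  have h2 : Tt (n + 1) = Uu n - Tt n := by
    rw [Tt, tsum_congr h1, Summable.tsum_sub hsummul (summable_T n), hmul, Tt]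
  rw [h2]; ring

lemma U_eq_sum_T (n : ℕ) : Uu n = ∑ k ∈ range (n + 1), (n.choose k : ℝ) * Tt k := by
  have h1 : ∀ i : ℕ, (i : ℝ) ^ n / (Nat.factorial i) =
      ∑ k ∈ range (n + 1), (n.choose k : ℝ) * (((i : ℝ) - 1) ^ k / (Nat.factorial i)) := by
    intro i
    have : (i : ℝ) ^ n = (((i : ℝ) - 1) + 1) ^ n := by ring_nf
    rw [this, add_pow, Finset.sum_div]
    refine Finset.sum_congr rfl fun k hk => ?_
    rw [one_pow, mul_one]
    ring
  rw [Uu, tsum_congr h1, Summable.tsum_finsetSum (fun k _ => (summable_T k).mul_left _)]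
  refine Finset.sum_congr rfl fun k hk => ?_
  rw [tsum_mul_left, Tt]

lemma T_succ (n : ℕ) : Tt (n + 1) = ∑ k ∈ range n, (n.choose k : ℝ) * Tt k := by
  have h := U_eq_T_add n
  have h2 := U_eq_sum_T n
  rw [Finset.sum_range_succ, Nat.choose_self] at h2
  simp only [Nat.cast_one, one_mul] at h2
  linarith

section Transport
variable {α β : Type*} [DecidableEq α] [DecidableEq β]


/-- Map a finpartition along a function injective on the base set. -/
def Finpartition.mapInj (f : α → β) (s : Finset α) (hf : Set.InjOn f s)
    (p : Finpartition s) : Finpartition (s.image f) where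
  parts := p.parts.image (Finset.image f)
  supIndep := by
    rw [Finset.supIndep_iff_pairwiseDisjoint]
    rintro b₁ hb₁ b₂ hb₂ hne
    simp only [coe_image, Set.mem_image, mem_coe] at hb₁ hb₂
    obtain ⟨a₁, ha₁, rfl⟩ := hb₁
    obtain ⟨a₂, ha₂, rfl⟩ := hb₂
    have hane : a₁ ≠ a₂ := fun h => hne (by rw [h])
    have hdisj := p.disjoint ha₁ ha₂ hane
    simp only [Function.onFun, id_eq] at hdisj ⊢
    rw [Finset.disjoint_left] at hdisj ⊢
    rintro x hx₁ hx₂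
    simp only [mem_image] at hx₁ hx₂
    obtain ⟨y₁, hy₁, rfl⟩ := hx₁
    obtain ⟨y₂, hy₂, hyeq⟩ := hx₂
    have hy₁s : y₁ ∈ s := p.le ha₁ hy₁
    have hy₂s : y₂ ∈ s := p.le ha₂ hy₂
    have : y₂ = y₁ := hf hy₂s hy₁s hyeq
    subst this
    exact hdisj hy₁ hy₂
  sup_parts := by
    ext x
    simp only [Finset.mem_sup, mem_image, id_eq]
    constructor
    · rintro ⟨b, ⟨c, hc, rfl⟩, hx⟩
      obtain ⟨y, hy, rfl⟩ := mem_image.mp hx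
      exact ⟨y, p.le hc hy, rfl⟩
    · rintro ⟨y, hy, rfl⟩
      obtain ⟨c, hc, hyc⟩ := p.exists_mem hy
      exact ⟨c.image f, ⟨c, hc, rfl⟩, mem_image_of_mem _ hyc⟩
  bot_notMem := by
    intro h
    obtain ⟨c, hc, hcb⟩ := mem_image.mp h
    exact p.bot_notMem (by rwa [Finset.image_eq_empty.mp hcb] at hc)

lemma Finpartition.mapInj_parts (f : α → β) (s : Finset α) (hf : Set.InjOn f s)
    (p : Finpartition s) :
    (p.mapInj f s hf).parts = p.parts.image (Finset.image f) := rfl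

/-- Transport the count of singleton-free finpartitions along a bijection of base sets. -/
lemma card_sfPart_eq (s : Finset α) (t : Finset β) (f : α → β) (g : β → α)
    (hfs : s.image f = t) (hgt : t.image g = s)
    (hgf : ∀ a ∈ s, g (f a) = a) (hfg : ∀ b ∈ t, f (g b) = b) :
    Nat.card {p : Finpartition s // ∀ b ∈ p.parts, b.card ≠ 1} =
    Nat.card {p : Finpartition t // ∀ b ∈ p.parts, b.card ≠ 1} := by
  have hf : Set.InjOn f s := fun x hx y hy h => by
    rw [← hgf x hx, ← hgf y hy, h]
  have hg : Set.InjOn g t := fun x hx y hy h => by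
    rw [← hfg x hx, ← hfg y hy, h]
  have himgf : ∀ {c : Finset α}, c ⊆ s → (c.image f).image g = c := by
    intro c hc
    rw [Finset.image_image]
    rw [show c.image (g ∘ f) = c.image id from Finset.image_congr
      (fun x hx => hgf x (hc hx))]
    exact Finset.image_id
  have himgg : ∀ {c : Finset β}, c ⊆ t → (c.image g).image f = c := by
    intro c hc
    rw [Finset.image_image]
    rw [show c.image (f ∘ g) = c.image id from Finset.image_congr
      (fun x hx => hfg x (hc hx))]
    exact Finset.image_id
  apply Nat.card_congr
  refine ⟨fun p => ⟨((p.1.mapInj f s hf).copy hfs), ?_⟩,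
          fun q => ⟨((q.1.mapInj g t hg).copy hgt), ?_⟩, ?_, ?_⟩
  · intro b hb
    simp only [Finpartition.copy, Finpartition.mapInj] at hb
    obtain ⟨c, hc, rfl⟩ := mem_image.mp hb
    rw [Finset.card_image_of_injOn (hf.mono (by exact_mod_cast p.1.le hc))]
    exact p.2 c hc
  · intro b hb
    simp only [Finpartition.copy, Finpartition.mapInj] at hb
    obtain ⟨c, hc, rfl⟩ := mem_image.mp hb
    rw [Finset.card_image_of_injOn (hg.mono (by exact_mod_cast q.1.le hc))]
    exact q.2 c hc
  · rintro ⟨p, hp⟩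
    apply Subtype.ext
    apply Finpartition.ext
    simp only [Finpartition.copy, Finpartition.mapInj]
    rw [Finset.image_image]
    nth_rewrite 2 [show p.parts = p.parts.image id from Finset.image_id.symm]
    apply Finset.image_congr
    intro c hc
    exact himgf (p.le hc)
  · rintro ⟨q, hq⟩
    apply Subtype.ext
    apply Finpartition.ext
    simp only [Finpartition.copy, Finpartition.mapInj]
    rw [Finset.image_image]
    nth_rewrite 2 [show q.parts = q.parts.image id from Finset.image_id.symm]
    apply Finset.image_congr
    intro c hc
    exact himgg (q.le hc)


lemma unique_sf_empty (s : Finset α) (hs : s = ∅) :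
    Nat.card {p : Finpartition s // ∀ b ∈ p.parts, b.card ≠ 1} = 1 := by
  subst hs
  have hbot : (∅ : Finset α) = (⊥ : Finset α) := rfl
  haveI : Unique {p : Finpartition (∅ : Finset α) // ∀ b ∈ p.parts, b.card ≠ 1} := by
    refine ⟨⟨⟨(Finpartition.empty (Finset α)).copy rfl, ?_⟩⟩, ?_⟩
    · intro b hb
      simp [Finpartition.copy, Finpartition.empty] at hb
    · rintro ⟨p, hp⟩
      apply Subtype.ext
      apply Finpartition.ext
      have h1 : p.parts = ∅ := Finpartition.parts_eq_empty_iff.mpr rfl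
      have h2 : ((Finpartition.empty (Finset α)).copy rfl).parts = ∅ := rfl
      rw [h1]
      rfl
  simp [Nat.card_unique]

lemma card_sf_eq_Btilde (s : Finset α) :
    Nat.card {p : Finpartition s // ∀ b ∈ p.parts, b.card ≠ 1} = Btilde s.card := by
  rcases eq_or_ne s ∅ with hs | hs
  · rw [unique_sf_empty s hs, hs]
    rw [Btilde, unique_sf_empty _ (Finset.eq_empty_of_forall_notMem (fun x _ => by have := x.2; simp at this))]
  · have hpos : 0 < s.card := Finset.card_pos.mpr (Finset.nonempty_of_ne_empty hs)
    set m := s.card with hm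
    let e := s.equivFin
    let f : α → Fin m := fun a => if h : a ∈ s then e ⟨a, h⟩ else ⟨0, hpos⟩
    let g : Fin m → α := fun y => (e.symm y : α)
    have hgf : ∀ a ∈ s, g (f a) = a := by
      intro a ha
      simp only [f, g, dif_pos ha, Equiv.symm_apply_apply]
    have hfg : ∀ b ∈ (Finset.univ : Finset (Fin m)), f (g b) = b := by
      intro b _
      have hmem : (e.symm b : α) ∈ s := (e.symm b).2
      simp only [f, g, dif_pos hmem]
      rw [show (⟨(e.symm b : α), hmem⟩ : {x // x ∈ s}) = e.symm b from Subtype.ext rfl]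
      simp
    have hfs : s.image f = Finset.univ := by
      apply Finset.eq_univ_of_card
      rw [Finset.card_image_of_injOn (fun x hx y hy h => by
        rw [← hgf x hx, ← hgf y hy, h])]
      simp [m]
    have hgt : (Finset.univ : Finset (Fin m)).image g = s := by
      apply Finset.eq_of_subset_of_card_le
      · intro x hx
        obtain ⟨y, _, rfl⟩ := Finset.mem_image.mp hx
        exact (e.symm y).2
      · rw [Finset.card_image_of_injOn (fun x hx y hy h => by
          rw [← hfg x hx, ← hfg y hy, h])]
        simp [m]
    rw [card_sfPart_eq s Finset.univ f g hfs hgt hgf hfg]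
    rfl

end Transport

section Bij

variable {n : ℕ}

lemma sup_erase_part (p : SetPartition (n+1)) :
    (p.parts.erase (p.part (Fin.last n))).sup id =
      (Finset.univ : Finset (Fin (n+1))) \ insert (Fin.last n) ((p.part (Fin.last n)).erase (Fin.last n)) := by
  have haB : Fin.last n ∈ p.part (Fin.last n) := p.mem_part (mem_univ _)
  rw [Finset.insert_erase haB]
  ext x
  simp only [Finset.mem_sup, Finset.mem_erase, id_eq, Finset.mem_sdiff, Finset.mem_univ, true_and]
  constructor
  · rintro ⟨c, ⟨hcB, hc⟩, hxc⟩ hxB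
    exact hcB (p.eq_of_mem_parts hc (p.part_mem.2 (mem_univ _)) hxc hxB)
  · intro hxB
    obtain ⟨c, hc, hxc⟩ := p.exists_mem (Finset.mem_univ x)
    refine ⟨c, ⟨fun h => hxB (h ▸ hxc), hc⟩, hxc⟩

lemma sdiff_sup_insert (S : Finset (Fin (n+1))) :
    ((Finset.univ : Finset (Fin (n+1))) \ insert (Fin.last n) S) ⊔ insert (Fin.last n) S =
      (Finset.univ : Finset (Fin (n+1))) :=
  sdiff_sup_cancel (le_top)

/-- The reconstruction map used for the recurrence. -/
noncomputable def bigMap (n : ℕ)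
    (x : Σ S : {S : Finset (Fin (n+1)) // S ⊆ (Finset.univ.erase (Fin.last n)) ∧ S.Nonempty},
      {q : Finpartition ((Finset.univ : Finset (Fin (n+1))) \ insert (Fin.last n) S.1) //
      ∀ b ∈ q.parts, b.card ≠ 1}) :
    {p : SetPartition (n+1) // ∀ b ∈ p.parts, b.card ≠ 1} :=
  ⟨(x.2.1.extend (b := insert (Fin.last n) x.1.1)
      (by simp [Finset.bot_eq_empty])
      sdiff_disjoint
      (sdiff_sup_insert x.1.1)),
   by
    intro b hb
    rw [Finpartition.extend_parts, Finset.mem_insert] at hb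
    rcases hb with rfl | hb
    · have hanotS : Fin.last n ∉ x.1.1 := fun h => by
        simpa using (x.1.2.1 h)
      rw [Finset.card_insert_of_notMem hanotS]
      have := Finset.card_pos.mpr x.1.2.2
      omega
    · exact x.2.2 b hb⟩

lemma bigMap_bijective (n : ℕ) : Function.Bijective (bigMap n) := by
  constructor
  · rintro ⟨⟨S, hS⟩, ⟨q, hq⟩⟩ ⟨⟨S', hS'⟩, ⟨q', hq'⟩⟩ heq
    have hanotS : Fin.last n ∉ S := fun h => by simpa using hS.1 h
    have hanotS' : Fin.last n ∉ S' := fun h => by simpa using hS'.1 h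
    have hparts : insert (insert (Fin.last n) S) q.parts
        = insert (insert (Fin.last n) S') q'.parts := by
      have := congrArg (fun z => (z.1 : Finpartition (univ : Finset (Fin (n+1)))).parts) heq
      simpa [bigMap, Finpartition.extend_parts] using this
    have hnotmem : ∀ (T : Finset (Fin (n+1))) (r : Finpartition ((univ : Finset (Fin (n+1))) \ insert (Fin.last n) T))
        (c : Finset (Fin (n+1))), c ∈ r.parts → Fin.last n ∉ c := by
      intro T r c hmem hlast
      have : Fin.last n ∈ (univ : Finset (Fin (n+1))) \ insert (Fin.last n) T :=
        r.le hmem hlast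
      simp at this
    have hSS : S = S' := by
      have h1 : insert (Fin.last n) S ∈ insert (insert (Fin.last n) S') q'.parts := by
        rw [← hparts]; exact Finset.mem_insert_self _ _
      rcases Finset.mem_insert.mp h1 with h | h
      · have := congrArg (Finset.erase · (Fin.last n)) h
        simpa [Finset.erase_insert hanotS, Finset.erase_insert hanotS'] using this
      · exact absurd (Finset.mem_insert_self _ _) (hnotmem S' q' _ h)
    subst hSS
    have hqq : q = q' := by
      apply Finpartition.ext
      have := congrArg (Finset.erase · (insert (Fin.last n) S)) hparts
      have e1 : insert (Fin.last n) S ∉ q.parts :=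
        fun hm => hnotmem S q _ hm (Finset.mem_insert_self _ _)
      have e2 : insert (Fin.last n) S ∉ q'.parts :=
        fun hm => hnotmem S q' _ hm (Finset.mem_insert_self _ _)
      simpa [Finset.erase_insert e1, Finset.erase_insert e2] using this
    subst hqq
    rfl
  · rintro ⟨p, hp⟩
    have haB : Fin.last n ∈ p.part (Fin.last n) := p.mem_part (mem_univ _)
    have hBmem := p.part_mem.2 (mem_univ (Fin.last n))
    refine ⟨⟨⟨(p.part (Fin.last n)).erase (Fin.last n),
      Finset.erase_subset_erase _ (Finset.subset_univ _),
      by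
        have h1 : (p.part (Fin.last n)).Nonempty := p.nonempty_of_mem_parts hBmem
        have h2 := hp _ hBmem
        rw [← Finset.card_pos, Finset.card_erase_of_mem haB]
        have := Finset.card_pos.mpr h1
        omega⟩,
     ⟨p.ofSubset (Finset.erase_subset _ _) (sup_erase_part p),
      fun b hb => hp b (Finset.mem_of_mem_erase hb)⟩⟩, ?_⟩
    apply Subtype.ext
    apply Finpartition.ext
    show insert (insert (Fin.last n) ((p.part (Fin.last n)).erase (Fin.last n)))
        (p.parts.erase (p.part (Fin.last n))) = p.parts
    rw [Finset.insert_erase haB]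
    exact Finset.insert_erase hBmem

end Bij



set_option maxHeartbeats 1000000 in
lemma btilde_rec (n : ℕ) :
    Btilde (n+1) + Btilde n = ∑ j ∈ range (n+1), n.choose j * Btilde (n - j) := by
  classical
  have h1 : Btilde (n+1) = Nat.card
      (Σ S : {S : Finset (Fin (n+1)) // S ⊆ (Finset.univ.erase (Fin.last n)) ∧ S.Nonempty},
        {q : Finpartition ((Finset.univ : Finset (Fin (n+1))) \ insert (Fin.last n) S.1) //
        ∀ b ∈ q.parts, b.card ≠ 1}) :=
    (Nat.card_eq_of_bijective (bigMap n) (bigMap_bijective n)).symm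
  rw [h1]
  rw [Nat.card_eq_fintype_card, Fintype.card_sigma]
  have h2 : ∀ S : {S : Finset (Fin (n+1)) // S ⊆ (Finset.univ.erase (Fin.last n)) ∧ S.Nonempty},
      Fintype.card {q : Finpartition ((Finset.univ : Finset (Fin (n+1))) \ insert (Fin.last n) S.1) //
        ∀ b ∈ q.parts, b.card ≠ 1} = Btilde (n - S.1.card) := by
    intro S
    rw [← Nat.card_eq_fintype_card, card_sf_eq_Btilde]
    congr 1
    have hanotS : Fin.last n ∉ S.1 := fun h => by simpa using S.2.1 h
    rw [Finset.card_sdiff_of_subset (Finset.subset_univ _), Finset.card_insert_of_notMem hanotS]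
    simp [Finset.card_univ]
  simp_rw [h2]
  have h3 : ∑ S : {S : Finset (Fin (n+1)) // S ⊆ (Finset.univ.erase (Fin.last n)) ∧ S.Nonempty},
      Btilde (n - S.1.card)
      = ∑ S ∈ ((Finset.univ.erase (Fin.last n)).powerset.erase ∅), Btilde (n - S.card) := by
    refine (Finset.sum_subtype _ (fun x => ?_) (fun (S : Finset (Fin (n+1))) => Btilde (n - S.card))).symm
    simp [Finset.mem_powerset, Finset.nonempty_iff_ne_empty, and_comm]
  rw [h3]
  have h4 : ∑ S ∈ ((Finset.univ.erase (Fin.last n)).powerset.erase ∅), Btilde (n - S.card)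
      + Btilde n = ∑ S ∈ (Finset.univ.erase (Fin.last n)).powerset, Btilde (n - S.card) := by
    have := Finset.sum_erase_add ((Finset.univ.erase (Fin.last n)).powerset)
      (fun S => Btilde (n - S.card)) (Finset.empty_mem_powerset _)
    simpa using this
  rw [h4]
  have hcard : (Finset.univ.erase (Fin.last n)).card = n := by
    rw [Finset.card_erase_of_mem (Finset.mem_univ _), Finset.card_univ]
    simp
  have h5 := Finset.sum_powerset_apply_card (fun j => Btilde (n - j))
    (x := (Finset.univ.erase (Fin.last n)))
  rw [h5, hcard]
  refine Finset.sum_congr rfl fun j hj => ?_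
  rw [smul_eq_mul]

end AuxDobinski

/-- Dobinski-type formula for the singleton-free Bell numbers. -/
theorem btilde_dobinski (n : ℕ) :
    (Btilde n : ℝ) = (Real.exp 1)⁻¹ * ∑' i : ℕ, ((i : ℝ) - 1) ^ n / (Nat.factorial i) := by
  induction n using Nat.strong_induction_on with
  | _ n ih =>
    replace ih : ∀ k < n, (Btilde k : ℝ) = (Real.exp 1)⁻¹ * Tt k := ih
    show (Btilde n : ℝ) = (Real.exp 1)⁻¹ * Tt n
    match n, ih with
    | 0, ih =>
      rw [T_zero]
      have h0 : Btilde 0 = 1 := unique_sf_empty (Finset.univ : Finset (Fin 0)) (by simp)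
      rw [h0, inv_mul_cancel₀ (Real.exp_ne_zero 1)]
      norm_num
    | (m+1), ih =>
      have hcomb : (Btilde (m+1) : ℝ) + Btilde m
          = ∑ k ∈ range (m+1), (m.choose k : ℝ) * Btilde k := by
        have h := btilde_rec m
        have hcast : (Btilde (m+1) : ℝ) + Btilde m
            = ∑ j ∈ range (m+1), (m.choose j : ℝ) * Btilde (m - j) := by
          exact_mod_cast h
        rw [hcast, ← Finset.sum_range_reflect]
        refine Finset.sum_congr rfl fun j hj => ?_
        have hjm : j ≤ m := by have := Finset.mem_range.mp hj; omega
        have h1 : m + 1 - 1 - j = m - j := by omega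
        rw [h1, Nat.choose_symm hjm, Nat.sub_sub_self hjm]
      have hana : Tt (m+1) = ∑ k ∈ range (m+1), (m.choose k : ℝ) * Tt k - Tt m := by
        have ha := U_eq_T_add m
        have hb := U_eq_sum_T m
        linarith
      rw [hana, mul_sub, Finset.mul_sum]
      have hterm : ∀ k ∈ range (m+1),
          (Real.exp 1)⁻¹ * ((m.choose k : ℝ) * Tt k) = (m.choose k : ℝ) * Btilde k := by
        intro k hk
        rw [ih k (by have := Finset.mem_range.mp hk; omega)]
        ring
      rw [Finset.sum_congr rfl hterm]
      have hm : (Real.exp 1)⁻¹ * Tt m = (Btilde m : ℝ) := (ih m (by omega)).symm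
      rw [hm]
      linarith
end

section
/- For every integer n ≥ 1, B̃(n + 1) = Σ_{i=0}^{n−1} C(n,i) · B̃(i). -/
open Finset

section Aux
variable {α β : Type*} [DecidableEq α] [DecidableEq β] [Fintype α] [Fintype β]

variable {α β : Type*} [DecidableEq α] [DecidableEq β] [Fintype α] [Fintype β]

/-- singleton-free partitions of `s` -/
noncomputable def nsing (s : Finset α) : Finset (Finpartition s) :=
  Finset.univ.filter (fun p => ∀ b ∈ p.parts, b.card ≠ 1)

/-- map a finpartition along an embedding -/
def pmap (f : α ↪ β) {s : Finset α} (P : Finpartition s) : Finpartition (s.map f) where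
  parts := P.parts.image (fun b => b.map f)
  supIndep := by
    rw [Finset.supIndep_iff_pairwiseDisjoint]
    rintro u hu v hv huv
    simp only [coe_image, Set.mem_image, mem_coe] at hu hv
    obtain ⟨b, hb, rfl⟩ := hu
    obtain ⟨c, hc, rfl⟩ := hv
    have hbc : b ≠ c := fun h => huv (by rw [h])
    have := P.disjoint hb hc hbc
    simp only [Function.onFun, id] at this ⊢
    rwa [Finset.disjoint_map]
  sup_parts := by
    ext x
    simp only [Finset.mem_sup, mem_image, mem_map]
    constructor
    · rintro ⟨u, ⟨b, hb, rfl⟩, hx⟩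
      rw [id, mem_map] at hx
      obtain ⟨y, hy, rfl⟩ := hx
      exact ⟨y, by rw [← P.sup_parts]; exact Finset.mem_sup.2 ⟨b, hb, hy⟩, rfl⟩
    · rintro ⟨y, hy, rfl⟩
      rw [← P.sup_parts, Finset.mem_sup] at hy
      obtain ⟨b, hb, hy⟩ := hy
      exact ⟨b.map f, ⟨b, hb, rfl⟩, mem_map_of_mem f hy⟩
  bot_notMem := by
    simp only [bot_eq_empty, mem_image]
    rintro ⟨b, hb, h⟩
    rw [Finset.map_eq_empty] at h
    exact P.bot_notMem (by simpa [h] using hb)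

/-- pull a finpartition of `s.map f` back to `s` -/
def ppull (f : α ↪ β) {s : Finset α} (Q : Finpartition (s.map f)) : Finpartition s where
  parts := Q.parts.image (fun b => s.filter (fun x => f x ∈ b))
  supIndep := by
    rw [Finset.supIndep_iff_pairwiseDisjoint]
    rintro u hu v hv huv
    simp only [coe_image, Set.mem_image, mem_coe] at hu hv
    obtain ⟨b, hb, rfl⟩ := hu
    obtain ⟨c, hc, rfl⟩ := hv
    have hbc : b ≠ c := fun h => huv (by rw [h])
    have hd := Q.disjoint hb hc hbc
    simp only [Function.onFun, id]
    rw [Finset.disjoint_left]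
    intro x hx hx'
    simp only [mem_filter] at hx hx'
    exact (Finset.disjoint_left.1 hd) hx.2 hx'.2
  sup_parts := by
    ext x
    simp only [Finset.mem_sup, mem_image]
    constructor
    · rintro ⟨u, ⟨b, hb, rfl⟩, hx⟩
      exact (mem_filter.1 hx).1
    · intro hx
      have : f x ∈ s.map f := mem_map_of_mem f hx
      rw [← Q.sup_parts, Finset.mem_sup] at this
      obtain ⟨b, hb, hfx⟩ := this
      exact ⟨s.filter (fun y => f y ∈ b), ⟨b, hb, rfl⟩, mem_filter.2 ⟨hx, hfx⟩⟩
  bot_notMem := by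
    simp only [bot_eq_empty, mem_image]
    rintro ⟨b, hb, h⟩
    obtain ⟨y, hy⟩ := Q.nonempty_of_mem_parts hb
    have hys : y ∈ s.map f := Q.le hb hy
    rw [mem_map] at hys
    obtain ⟨x, hx, rfl⟩ := hys
    have : x ∈ s.filter (fun z => f z ∈ b) := mem_filter.2 ⟨hx, hy⟩
    rw [h] at this
    exact absurd this (notMem_empty x)

lemma filter_map_eq {f : α ↪ β} {s : Finset α} {b : Finset β} (hb : b ⊆ s.map f) :
    (s.filter (fun x => f x ∈ b)).map f = b := by
  ext y
  simp only [mem_map, mem_filter]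
  constructor
  · rintro ⟨x, ⟨_, hx⟩, rfl⟩; exact hx
  · intro hy
    obtain ⟨x, hx, rfl⟩ := mem_map.1 (hb hy)
    exact ⟨x, ⟨hx, hy⟩, rfl⟩

lemma map_filter_eq {f : α ↪ β} {s : Finset α} {b : Finset α} (hb : b ⊆ s) :
    s.filter (fun x => f x ∈ b.map f) = b := by
  ext x
  simp only [mem_filter, mem_map]
  constructor
  · rintro ⟨hx, y, hy, hxy⟩
    rwa [← f.injective hxy]
  · intro hx
    exact ⟨hb hx, x, hx, rfl⟩

lemma nsing_map_card (f : α ↪ β) (s : Finset α) :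
    (nsing (s.map f)).card = (nsing s).card := by
  apply Finset.card_bij' (fun Q _ => ppull f Q) (fun P _ => pmap f P)
  · intro Q hQ
    simp only [nsing, mem_filter, mem_univ, true_and] at hQ ⊢
    intro b hb
    simp only [ppull, mem_image] at hb
    obtain ⟨c, hc, rfl⟩ := hb
    have : (s.filter (fun x => f x ∈ c)).map f = c := filter_map_eq (Q.le hc)
    rw [← Finset.card_map f, this]
    exact hQ c hc
  · intro P hP
    simp only [nsing, mem_filter, mem_univ, true_and] at hP ⊢
    intro b hb
    simp only [pmap, mem_image] at hb
    obtain ⟨c, hc, rfl⟩ := hb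
    rw [Finset.card_map]
    exact hP c hc
  · intro Q _
    apply Finpartition.ext
    simp only [pmap, ppull, Finset.image_image]
    conv_rhs => rw [← Finset.image_id (s := Q.parts)]
    apply Finset.image_congr
    intro b hb
    exact filter_map_eq (Q.le hb)
  · intro P _
    apply Finpartition.ext
    simp only [pmap, ppull, Finset.image_image]
    conv_rhs => rw [← Finset.image_id (s := P.parts)]
    apply Finset.image_congr
    intro b hb
    exact map_filter_eq (P.le hb)

lemma avoid_parts_of_mem {s b : Finset α} (P : Finpartition s) (hb : b ∈ P.parts) :
    (P.avoid b).parts = P.parts.erase b := by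
  ext c
  rw [Finpartition.mem_avoid, mem_erase]
  constructor
  · rintro ⟨d, hd, hdb, rfl⟩
    have hne : d ≠ b := fun h => hdb (h ▸ le_refl d)
    have hdis : Disjoint d b := P.disjoint hd hb hne
    rw [_root_.sdiff_eq_self_iff_disjoint.2 hdis.symm]
    exact ⟨hne, hd⟩
  · rintro ⟨hcb, hc⟩
    have hdis : Disjoint c b := P.disjoint hc hb hcb
    refine ⟨c, hc, fun h => ?_, _root_.sdiff_eq_self_iff_disjoint.2 hdis.symm⟩
    exact P.ne_bot hc (le_bot_iff.1 (hdis (le_refl c) h))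

variable {a : α} {s : Finset α}

lemma fiber_card_eq (ha : a ∉ s) {B : Finset α} (hBs : B ⊆ s) (hBne : B.Nonempty) :
    ((nsing (insert a s)).filter (fun p => (p.part a).erase a = B)).card
      = (nsing (s \ B)).card := by
  have haB : a ∉ B := fun h => ha (hBs h)
  have hne : (insert a B : Finset α) ≠ ⊥ := by
    simp [bot_eq_empty, Finset.insert_ne_empty]
  have hdisj : Disjoint (s \ B) (insert a B) := by
    rw [Finset.disjoint_left]
    intro x hx hx'
    rw [mem_sdiff] at hx
    rcases mem_insert.1 hx' with rfl | h
    · exact ha hx.1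
    · exact hx.2 h
  have hsup : (s \ B) ⊔ (insert a B) = insert a s := by
    ext x
    simp only [sup_eq_union, mem_union, mem_sdiff, mem_insert]
    constructor
    · rintro (⟨h, _⟩ | (rfl | h))
      · exact Or.inr h
      · exact Or.inl rfl
      · exact Or.inr (hBs h)
    · rintro (rfl | h)
      · exact Or.inr (Or.inl rfl)
      · by_cases hxB : x ∈ B
        · exact Or.inr (Or.inr hxB)
        · exact Or.inl ⟨h, hxB⟩
  have hcopy : insert a s \ insert a B = s \ B := by
    ext x
    simp only [mem_sdiff, mem_insert, not_or]
    constructor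
    · rintro ⟨rfl | h, hx2, hx3⟩
      · exact absurd rfl hx2
      · exact ⟨h, hx3⟩
    · rintro ⟨h, hB⟩
      exact ⟨Or.inr h, fun he => ha (he ▸ h), hB⟩
  apply Finset.card_bij' (fun p _ => (p.avoid (insert a B)).copy hcopy)
    (fun q _ => q.extend hne hdisj hsup)
  · -- left inverse
    intro p hp
    simp only [mem_filter] at hp
    have hpart : p.part a = insert a B := by
      rw [← hp.2, Finset.insert_erase (p.mem_part (mem_insert_self a s))]
    have hmem : (insert a B : Finset α) ∈ p.parts := hpart ▸ p.part_mem.2 (mem_insert_self a s)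
    apply Finpartition.ext
    show insert (insert a B) ((p.avoid (insert a B)).copy hcopy).parts = p.parts
    rw [Finpartition.copy_parts, avoid_parts_of_mem p hmem, Finset.insert_erase hmem]
  · -- right inverse
    intro q hq
    have hnotmem : (insert a B : Finset α) ∉ q.parts := by
      intro h
      have := q.le h (mem_insert_self a B)
      rw [mem_sdiff] at this
      exact ha this.1
    have hmem : (insert a B : Finset α) ∈ (q.extend hne hdisj hsup).parts :=
      mem_insert_self _ _
    apply Finpartition.ext
    rw [Finpartition.copy_parts, avoid_parts_of_mem _ hmem]
    show (insert (insert a B) q.parts).erase (insert a B) = q.parts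
    rw [Finset.erase_insert hnotmem]

  · -- forward maps into nsing (s \ B)
    intro p hp
    simp only [mem_filter, nsing, mem_univ, true_and] at hp ⊢
    obtain ⟨hp, hpB⟩ := hp
    intro b hb
    have hpart : p.part a = insert a B := by
      rw [← hpB, Finset.insert_erase (p.mem_part (mem_insert_self a s))]
    rw [Finpartition.copy_parts, avoid_parts_of_mem p (hpart ▸ p.part_mem.2 (mem_insert_self a s))]
      at hb
    exact hp b (mem_of_mem_erase hb)
  · -- backward maps into fiber
    intro q hq
    simp only [nsing, mem_filter, mem_univ, true_and] at hq ⊢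
    have hparts : (q.extend hne hdisj hsup).parts = insert (insert a B) q.parts := rfl
    have hmem : (insert a B : Finset α) ∈ (q.extend hne hdisj hsup).parts := by
      rw [hparts]; exact mem_insert_self _ _
    constructor
    · intro b hb
      rw [hparts, mem_insert] at hb
      rcases hb with rfl | hb
      · rw [Finset.card_insert_of_notMem haB]
        have := Finset.card_pos.2 hBne
        omega
      · exact hq b hb
    · rw [(q.extend hne hdisj hsup).part_eq_of_mem hmem (mem_insert_self a B),
        Finset.erase_insert haB]
lemma nsing_card_univ (s : Finset α) :
    (nsing s).card = (nsing (univ : Finset (Fin s.card))).card := by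
  have hinj : Function.Injective (fun i : Fin s.card => (s.equivFin.symm i : α)) := by
    intro i j h
    exact s.equivFin.symm.injective (Subtype.ext h)
  set f : Fin s.card ↪ α := ⟨fun i => (s.equivFin.symm i : α), hinj⟩
  have hmap : (univ : Finset (Fin s.card)).map f = s := by
    ext x
    simp only [mem_map, mem_univ, true_and]
    constructor
    · rintro ⟨i, rfl⟩
      exact (s.equivFin.symm i).2
    · intro hx
      exact ⟨s.equivFin ⟨x, hx⟩, by simp [f]⟩
  rw [← nsing_map_card f (univ : Finset (Fin s.card)), hmap]

lemma fiber_empty_eq (ha : a ∉ s) :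
    ((nsing (insert a s)).filter (fun p => (p.part a).erase a = ∅)).card = 0 := by
  rw [Finset.card_eq_zero, Finset.filter_eq_empty_iff]
  intro p hp
  simp only [nsing, mem_filter, mem_univ, true_and] at hp
  intro h
  rw [Finset.erase_eq_empty_iff] at h
  have hmem := p.mem_part (mem_insert_self a s)
  rcases h with h | h
  · rw [h] at hmem; exact absurd hmem (notMem_empty a)
  · exact hp _ (p.part_mem.2 (mem_insert_self a s)) (by rw [h, card_singleton])

lemma nsing_insert_card (ha : a ∉ s) :
    (nsing (insert a s)).card
      = ∑ B ∈ s.powerset, (if B = ∅ then 0 else (nsing (univ : Finset (Fin (s.card - B.card)))).card) := by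
  rw [Finset.card_eq_sum_card_fiberwise
    (f := fun p => (p.part a).erase a) (t := s.powerset)]
  · apply Finset.sum_congr rfl
    intro B hB
    rw [mem_powerset] at hB
    by_cases hBe : B = ∅
    · subst hBe
      simp only [if_pos rfl]
      exact fiber_empty_eq ha
    · rw [if_neg hBe]
      rw [fiber_card_eq ha hB (nonempty_iff_ne_empty.2 hBe), nsing_card_univ,
        Finset.card_sdiff_of_subset hB]
  · intro p hp
    rw [mem_coe, mem_powerset]
    intro x hx
    rw [mem_erase] at hx
    have := p.le (p.part_mem.2 (mem_insert_self a s)) hx.2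
    rcases mem_insert.1 this with rfl | h
    · exact absurd rfl hx.1
    · exact h

end Aux

lemma Btilde_eq_nsing (m : ℕ) : Btilde m = (nsing (univ : Finset (Fin m))).card := by
  rw [Btilde, Nat.card_eq_fintype_card, nsing]
  exact Fintype.card_subtype (p := fun p : SetPartition m => ∀ b ∈ p.parts, b.card ≠ 1)

/-- Recurrence for the singleton-free Bell numbers. -/
theorem btilde_recurrence (n : ℕ) (hn : 1 ≤ n) :
    Btilde (n + 1) = ∑ i ∈ Finset.range n, n.choose i * Btilde i := by
  classical
  set a : Fin (n + 1) := Fin.last n with ha_def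
  set s : Finset (Fin (n + 1)) := Finset.univ.erase a with hs_def
  have ha : a ∉ s := Finset.notMem_erase a _
  have hins : insert a s = Finset.univ := Finset.insert_erase (Finset.mem_univ a)
  have hcard : s.card = n := by
    rw [hs_def, Finset.card_erase_of_mem (Finset.mem_univ a), Finset.card_univ,
      Fintype.card_fin]
    omega
  have h1 : Btilde (n + 1) = (nsing (insert a s)).card := by
    rw [Btilde_eq_nsing, hins]
  rw [h1, nsing_insert_card ha]
  set G : ℕ → ℕ := fun m => if m = 0 then 0 else Btilde (n - m) with hG_def
  have h2 : ∑ B ∈ s.powerset,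
      (if B = ∅ then 0 else (nsing (univ : Finset (Fin (s.card - B.card)))).card)
      = ∑ B ∈ s.powerset, G B.card := by
    apply Finset.sum_congr rfl
    intro B hB
    by_cases hBe : B = ∅
    · simp [hBe, hG_def]
    · rw [if_neg hBe]
      simp only [hG_def]
      rw [if_neg (fun h => hBe (Finset.card_eq_zero.1 h)), ← Btilde_eq_nsing, hcard]
  rw [h2, Finset.sum_powerset_apply_card G, hcard]
  rw [Finset.sum_range_succ']
  have hG0 : G 0 = 0 := by simp [hG_def]
  rw [hG0]
  simp only [smul_eq_mul, Nat.mul_zero, Nat.add_zero]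
  have h3 : ∀ i ∈ Finset.range n,
      n.choose (i + 1) * G (i + 1) = n.choose (n - 1 - i) * Btilde (n - 1 - i) := by
    intro i hi
    rw [Finset.mem_range] at hi
    have h4 : n - (i + 1) = n - 1 - i := by omega
    have h5 : n.choose (n - 1 - i) = n.choose (i + 1) := by
      rw [← h4]
      exact Nat.choose_symm (by omega)
    rw [hG_def]
    simp only [Nat.succ_ne_zero, if_false]
    rw [h4, h5]
  rw [Finset.sum_congr rfl h3, Finset.sum_range_reflect (fun j => n.choose j * Btilde j) n]
end

section
/- For every integer n ≥ 0, B̃(n) = Σ_{i=0}^{n} (−1)^{n−i} · C(n,i) · B(i). -/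
open Finset

noncomputable def nosingCount (β : Type) [Fintype β] [DecidableEq β] : ℕ :=
  Nat.card {q : Finpartition (univ : Finset β) // ∀ b ∈ q.parts, b.card ≠ 1}

def finsetOrderIso {β γ : Type} [DecidableEq β] [DecidableEq γ] (e : β ≃ γ) :
    Finset β ≃o Finset γ where
  toEquiv := e.finsetCongr
  map_rel_iff' := by
    intro a b
    simp [Equiv.finsetCongr_apply, Finset.map_subset_map]

lemma finsetOrderIso_apply {β γ : Type} [DecidableEq β] [DecidableEq γ] (e : β ≃ γ)
    (s : Finset β) : finsetOrderIso e s = s.map e.toEmbedding := rfl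

lemma nosingCount_congr {β γ : Type} [Fintype β] [DecidableEq β] [Fintype γ] [DecidableEq γ]
    (e : β ≃ γ) : nosingCount β = nosingCount γ := by
  have huniv : finsetOrderIso e (univ : Finset β) = univ := by
    ext x; simp [finsetOrderIso_apply, Finset.mem_map_equiv]
  have huniv' : finsetOrderIso e.symm (univ : Finset γ) = univ := by
    ext x; simp [finsetOrderIso_apply, Finset.mem_map_equiv]
  refine Nat.card_eq_of_bijective (fun q => ⟨((q.1.map (finsetOrderIso e)).copy huniv), ?_⟩) ?_
  · intro b hb
    simp only [Finpartition.copy_parts, Finpartition.parts_map, Finset.mem_map] at hb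
    obtain ⟨c, hc, rfl⟩ := hb
    show (c.map e.toEmbedding).card ≠ 1
    rw [Finset.card_map]
    exact q.2 c hc
  · constructor
    · intro q q' h
      apply Subtype.ext
      apply Finpartition.ext
      have h2 := congrArg (fun x => x.1.parts) h
      simp only [Finpartition.copy_parts, Finpartition.parts_map] at h2
      exact Finset.map_injective _ h2
    · intro q
      refine ⟨⟨(q.1.map (finsetOrderIso e.symm)).copy huniv', ?_⟩, ?_⟩
      · intro b hb
        simp only [Finpartition.copy_parts, Finpartition.parts_map, Finset.mem_map] at hb
        obtain ⟨c, hc, rfl⟩ := hb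
        show (c.map e.symm.toEmbedding).card ≠ 1
        rw [Finset.card_map]; exact q.2 c hc
      · apply Subtype.ext
        apply Finpartition.ext
        simp only [Finpartition.copy_parts, Finpartition.parts_map, Finset.map_map]
        ext b
        simp only [Finset.mem_map, Function.Embedding.trans_apply]
        constructor
        · rintro ⟨c, hc, rfl⟩
          convert hc using 1
          ext x
          simp [finsetOrderIso_apply, Finset.mem_map_equiv]
        · intro hb
          refine ⟨b, hb, ?_⟩
          ext x
          simp [finsetOrderIso_apply, Finset.mem_map_equiv]

lemma mem_fixedSet {n : ℕ} {p : SetPartition n} {i : Fin n} :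
    i ∈ fixedSet p ↔ ({i} : Finset (Fin n)) ∈ p.parts := by simp [fixedSet]

lemma not_fixed_of_mem {n : ℕ} {p : SetPartition n} {b : Finset (Fin n)} (hb : b ∈ p.parts)
    (hcard : b.card ≠ 1) {i : Fin n} (hi : i ∈ b) : i ∉ fixedSet p := by
  intro hfix
  rw [mem_fixedSet] at hfix
  have hne : b ≠ {i} := by rintro rfl; simp at hcard
  have hd := p.disjoint (Finset.mem_coe.2 hb) (Finset.mem_coe.2 hfix) hne
  exact (Finset.disjoint_left.1 hd hi (Finset.mem_singleton_self i))

lemma card_subtype_of_subset {n : ℕ} {s B : Finset (Fin n)} (h : ∀ x ∈ B, x ∈ s) :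
    (B.subtype (· ∈ s)).card = B.card := by
  conv_rhs => rw [← Finset.subtype_map_of_mem h]
  rw [Finset.card_map]

def restrictNS {n : ℕ} (p : SetPartition n) (s : Finset (Fin n)) (hs : (fixedSet p)ᶜ = s) :
    Finpartition (univ : Finset {x // x ∈ s}) where
  parts := (p.parts.filter fun b => b.card ≠ 1).image (Finset.subtype (· ∈ s))
  supIndep := by
    rw [Finset.supIndep_iff_pairwiseDisjoint]
    intro a ha b hb hab
    simp only [Finset.coe_image, Set.mem_image, Finset.mem_coe, Finset.mem_filter] at ha hb
    obtain ⟨A, ⟨hA, hA1⟩, rfl⟩ := ha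
    obtain ⟨B, ⟨hB, hB1⟩, rfl⟩ := hb
    have hAB : A ≠ B := fun h => hab (by rw [h])
    have hd := p.disjoint (Finset.mem_coe.2 hA) (Finset.mem_coe.2 hB) hAB
    simp only [Function.onFun, id_eq]
    rw [Finset.disjoint_left]
    intro x hx hx'
    simp only [id_eq, Finset.mem_subtype] at hx hx'
    exact Finset.disjoint_left.1 hd hx hx'
  sup_parts := by
    apply le_antisymm le_top
    intro x _
    rw [Finset.mem_sup]
    obtain ⟨B, hB, hxB⟩ := Finpartition.exists_mem p (Finset.mem_univ (x : Fin n))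
    have hB1 : B.card ≠ 1 := by
      intro h1
      obtain ⟨y, rfl⟩ := Finset.card_eq_one.1 h1
      rw [Finset.mem_singleton] at hxB
      have hfix : (x : Fin n) ∈ fixedSet p := mem_fixedSet.2 (hxB ▸ hB)
      have hxs : (x : Fin n) ∈ (fixedSet p)ᶜ := by rw [hs]; exact x.2
      exact (Finset.mem_compl.1 hxs) hfix
    refine ⟨B.subtype (· ∈ s), Finset.mem_image_of_mem _ (Finset.mem_filter.2 ⟨hB, hB1⟩), ?_⟩
    show x ∈ B.subtype (· ∈ s)
    rw [Finset.mem_subtype]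
    exact hxB
  bot_notMem := by
    simp only [Finset.bot_eq_empty, Finset.mem_image, Finset.mem_filter]
    rintro ⟨B, ⟨hB, hB1⟩, hBe⟩
    obtain ⟨y, hy⟩ := p.nonempty_of_mem_parts hB
    have hys : y ∈ s := by
      rw [← hs, Finset.mem_compl]
      exact not_fixed_of_mem hB hB1 hy
    have : (⟨y, hys⟩ : {x // x ∈ s}) ∈ B.subtype (· ∈ s) := Finset.mem_subtype.2 hy
    rw [hBe] at this
    exact absurd this (Finset.notMem_empty _)

def extendNS {n : ℕ} (s : Finset (Fin n)) (q : Finpartition (univ : Finset {x // x ∈ s})) :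
    SetPartition n where
  parts := q.parts.image (Finset.map (Function.Embedding.subtype (· ∈ s))) ∪
    sᶜ.image (fun i => ({i} : Finset (Fin n)))
  supIndep := by
    rw [Finset.supIndep_iff_pairwiseDisjoint]
    intro a ha b hb hab
    simp only [Finset.coe_union, Set.mem_union, Finset.coe_image, Set.mem_image,
      Finset.mem_coe] at ha hb
    show Disjoint a b
    rw [Finset.disjoint_left]
    intro x hxa hxb
    rcases ha with ⟨A, hA, rfl⟩ | ⟨i, hi, rfl⟩ <;> rcases hb with ⟨B, hB, rfl⟩ | ⟨j, hj, rfl⟩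
    · have hAB : A ≠ B := fun h => hab (by rw [h])
      have hd := q.disjoint (Finset.mem_coe.2 hA) (Finset.mem_coe.2 hB) hAB
      simp only [Finset.mem_map, Function.Embedding.coe_subtype] at hxa hxb
      obtain ⟨y, hy, rfl⟩ := hxa
      obtain ⟨z, hz, hzy⟩ := hxb
      have : z = y := Subtype.ext hzy
      subst this
      exact Finset.disjoint_left.1 hd hy hz
    · rw [Finset.mem_singleton] at hxb; subst hxb
      have : x ∈ s := Finset.property_of_mem_map_subtype A hxa
      rw [Finset.mem_compl] at hj
      exact hj this
    · rw [Finset.mem_singleton] at hxa; subst hxa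
      have : x ∈ s := Finset.property_of_mem_map_subtype B hxb
      rw [Finset.mem_compl] at hi
      exact hi this
    · rw [Finset.mem_singleton] at hxa hxb
      exact hab (by rw [← hxa, ← hxb])
  sup_parts := by
    apply le_antisymm le_top
    intro x _
    rw [Finset.mem_sup]
    by_cases hx : x ∈ s
    · obtain ⟨B, hB, hxB⟩ := Finpartition.exists_mem q (Finset.mem_univ (⟨x, hx⟩ : {x // x ∈ s}))
      refine ⟨B.map (Function.Embedding.subtype (· ∈ s)),
        Finset.mem_union_left _ (Finset.mem_image_of_mem _ hB), ?_⟩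
      show x ∈ B.map (Function.Embedding.subtype (· ∈ s))
      rw [Finset.mem_map]
      exact ⟨⟨x, hx⟩, hxB, rfl⟩
    · exact ⟨{x}, Finset.mem_union_right _
        (Finset.mem_image_of_mem _ (Finset.mem_compl.2 hx)), Finset.mem_singleton_self x⟩
  bot_notMem := by
    simp only [Finset.bot_eq_empty, Finset.mem_union, Finset.mem_image]
    rintro (⟨B, hB, hBe⟩ | ⟨i, _, hie⟩)
    · rw [Finset.map_eq_empty] at hBe
      rw [hBe] at hB; exact q.bot_notMem hB
    · exact Finset.singleton_ne_empty i hie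

lemma fixedSet_extendNS {n : ℕ} (s : Finset (Fin n)) (q : Finpartition (univ : Finset {x // x ∈ s}))
    (hq : ∀ b ∈ q.parts, b.card ≠ 1) : fixedSet (extendNS s q) = sᶜ := by
  ext i
  rw [mem_fixedSet]
  show _ ∈ q.parts.image _ ∪ _ ↔ _
  simp only [Finset.mem_union, Finset.mem_image]
  constructor
  · rintro (⟨B, hB, hBe⟩ | ⟨j, hj, hje⟩)
    · exfalso
      apply hq B hB
      have := congrArg Finset.card hBe
      rwa [Finset.card_map, Finset.card_singleton] at this
    · rwa [← Finset.singleton_injective hje]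
  · intro hi
    exact Or.inr ⟨i, hi, rfl⟩

lemma singleton_image_fixedSet {n : ℕ} (p : SetPartition n) :
    (fixedSet p).image (fun i => ({i} : Finset (Fin n))) =
      p.parts.filter (fun b => b.card = 1) := by
  ext b
  simp only [Finset.mem_image, Finset.mem_filter, mem_fixedSet]
  constructor
  · rintro ⟨i, hi, rfl⟩
    exact ⟨hi, Finset.card_singleton i⟩
  · rintro ⟨hb, h1⟩
    obtain ⟨i, rfl⟩ := Finset.card_eq_one.1 h1
    exact ⟨i, hb, rfl⟩

lemma subtype_map_subtype {n : ℕ} {s : Finset (Fin n)} (B : Finset {x // x ∈ s}) :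
    (B.map (Function.Embedding.subtype (· ∈ s))).subtype (· ∈ s) = B := by
  ext x
  simp only [Finset.mem_subtype, Finset.mem_map, Function.Embedding.coe_subtype]
  constructor
  · rintro ⟨y, hy, hyx⟩
    rwa [← Subtype.ext hyx]
  · intro hx
    exact ⟨x, hx, rfl⟩

def fiberEquiv {n : ℕ} (s : Finset (Fin n)) :
    {p : SetPartition n // (fixedSet p)ᶜ = s} ≃
      {q : Finpartition (univ : Finset {x // x ∈ s}) // ∀ b ∈ q.parts, b.card ≠ 1} where
  toFun p := ⟨restrictNS p.1 s p.2, by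
    intro b hb
    simp only [restrictNS, Finset.mem_image, Finset.mem_filter] at hb
    obtain ⟨B, ⟨hB, hB1⟩, rfl⟩ := hb
    have hBsub : ∀ x ∈ B, x ∈ s := fun x hx => by
      rw [← p.2, Finset.mem_compl]; exact not_fixed_of_mem hB hB1 hx
    rw [card_subtype_of_subset hBsub]; exact hB1⟩
  invFun q := ⟨extendNS s q.1, by rw [fixedSet_extendNS s q.1 q.2, compl_compl]⟩
  left_inv := by
    rintro ⟨p, hp⟩
    apply Subtype.ext
    apply Finpartition.ext
    show (((p.parts.filter fun b => b.card ≠ 1).image (Finset.subtype (· ∈ s))).image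
        (Finset.map (Function.Embedding.subtype (· ∈ s))) ∪
        sᶜ.image (fun i => ({i} : Finset (Fin n)))) = p.parts
    rw [Finset.image_image]
    have h1 : (p.parts.filter fun b => b.card ≠ 1).image
        ((Finset.map (Function.Embedding.subtype (· ∈ s))) ∘ (Finset.subtype (· ∈ s)))
        = p.parts.filter fun b => b.card ≠ 1 := by
      rw [show (p.parts.filter fun b => b.card ≠ 1).image
          ((Finset.map (Function.Embedding.subtype (· ∈ s))) ∘ (Finset.subtype (· ∈ s)))
          = (p.parts.filter fun b => b.card ≠ 1).image id from
        Finset.image_congr (by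
          intro B hB
          simp only [Finset.coe_filter, Set.mem_setOf_eq] at hB
          simp only [Function.comp_apply, id_eq]
          exact Finset.subtype_map_of_mem (fun x hx => by
            rw [← hp, Finset.mem_compl]
            exact not_fixed_of_mem hB.1 hB.2 hx))]
      exact Finset.image_id
    rw [h1]
    have h2 : sᶜ = fixedSet p := by rw [← hp, compl_compl]
    rw [h2, singleton_image_fixedSet, Finset.union_comm]
    ext b
    simp only [Finset.mem_union, Finset.mem_filter]
    constructor
    · rintro (⟨hb, _⟩ | ⟨hb, _⟩) <;> exact hb
    · intro hb
      by_cases hc : b.card = 1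
      · exact Or.inl ⟨hb, hc⟩
      · exact Or.inr ⟨hb, hc⟩
  right_inv := by
    rintro ⟨q, hq⟩
    apply Subtype.ext
    apply Finpartition.ext
    show ((q.parts.image (Finset.map (Function.Embedding.subtype (· ∈ s))) ∪
        sᶜ.image (fun i => ({i} : Finset (Fin n)))).filter fun b => b.card ≠ 1).image
        (Finset.subtype (· ∈ s)) = q.parts
    rw [Finset.filter_union]
    have h1 : (q.parts.image (Finset.map (Function.Embedding.subtype (· ∈ s)))).filter
        (fun b => b.card ≠ 1) = q.parts.image (Finset.map (Function.Embedding.subtype (· ∈ s))) :=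
      Finset.filter_true_of_mem (by
        rintro b hb
        obtain ⟨B, hB, rfl⟩ := Finset.mem_image.1 hb
        rw [Finset.card_map]
        exact hq B hB)
    have h2 : (sᶜ.image (fun i => ({i} : Finset (Fin n)))).filter (fun b => b.card ≠ 1) = ∅ := by
      rw [Finset.filter_eq_empty_iff]
      rintro b hb
      obtain ⟨i, _, rfl⟩ := Finset.mem_image.1 hb
      simp
    rw [h1, h2, Finset.union_empty, Finset.image_image]
    rw [show q.parts.image ((Finset.subtype (· ∈ s)) ∘
        (Finset.map (Function.Embedding.subtype (· ∈ s)))) = q.parts.image id from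
      Finset.image_congr (fun B _ => subtype_map_subtype B)]
    exact Finset.image_id

lemma card_fiber {n : ℕ} (s : Finset (Fin n)) :
    Nat.card {p : SetPartition n // (fixedSet p)ᶜ = s} = Btilde s.card := by
  rw [Nat.card_congr (fiberEquiv s)]
  have : nosingCount {x // x ∈ s} = nosingCount (Fin s.card) := nosingCount_congr s.equivFin
  exact this

lemma bell_sum (n : ℕ) : Bell n = ∑ i ∈ Finset.range (n + 1), n.choose i * Btilde i := by
  classical
  have h0 : Bell n = ∑ s : Finset (Fin n), Btilde s.card := by
    rw [Bell, ← Nat.card_congr (Equiv.sigmaFiberEquiv (fun p : SetPartition n => (fixedSet p)ᶜ))]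
    rw [Nat.card_eq_fintype_card, Fintype.card_sigma]
    refine Finset.sum_congr rfl fun s _ => ?_
    rw [← Nat.card_eq_fintype_card]
    exact card_fiber s
  rw [h0, ← Finset.powerset_univ, Finset.sum_powerset_apply_card]
  rw [Finset.card_univ, Fintype.card_fin]
  exact Finset.sum_congr rfl fun i _ => by rw [smul_eq_mul]

lemma alt_sum (n j : ℕ) (hj : j ≤ n) :
    ∑ i ∈ Finset.range (n + 1), (-1 : ℤ) ^ (n - i) * (n.choose i : ℤ) * (i.choose j : ℤ) =
      if j = n then 1 else 0 := by
  have hsub : Finset.Ico j (n + 1) ⊆ Finset.range (n + 1) := by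
    rw [Finset.range_eq_Ico]
    exact Finset.Ico_subset_Ico (Nat.zero_le _) le_rfl
  rw [← Finset.sum_subset hsub (by
    intro i hmem hi
    rw [Finset.mem_range] at hmem
    simp only [Finset.mem_Ico, not_and, not_lt] at hi
    have : i < j := by
      by_contra h
      push_neg at h
      exact absurd hmem (not_lt.2 (hi h))
    rw [Nat.choose_eq_zero_of_lt this]
    ring)]
  rw [Finset.sum_Ico_eq_sum_range]
  have hlen : n + 1 - j = n - j + 1 := by omega
  rw [hlen]
  have hterm : ∀ k ∈ Finset.range (n - j + 1),
      (-1 : ℤ) ^ (n - (j + k)) * (n.choose (j + k) : ℤ) * ((j + k).choose j : ℤ) =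
        ((-1) ^ (n - j) * (n.choose j : ℤ)) * ((-1) ^ k * ((n - j).choose k : ℤ)) := by
    intro k hk
    rw [Finset.mem_range] at hk
    have hkle : k ≤ n - j := by omega
    have hchoose : n.choose (j + k) * (j + k).choose j = n.choose j * (n - j).choose k := by
      have := Nat.choose_mul (n := n) (show j ≤ j + k by omega)
      simpa [Nat.add_sub_cancel_left] using this
    have hsign : (-1 : ℤ) ^ (n - (j + k)) = (-1) ^ (n - j) * (-1) ^ k := by
      have h1 : (-1 : ℤ) ^ (n - j) = (-1) ^ (n - (j + k)) * (-1) ^ k := by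
        rw [← pow_add]
        congr 1
        omega
      have h2 : ((-1 : ℤ) ^ k) * ((-1) ^ k) = 1 := by
        rw [← pow_add, ← two_mul, pow_mul]
        norm_num
      calc (-1 : ℤ) ^ (n - (j + k)) = (-1) ^ (n - (j + k)) * (((-1) ^ k) * ((-1) ^ k)) := by
            rw [h2, mul_one]
        _ = ((-1) ^ (n - (j + k)) * (-1) ^ k) * (-1) ^ k := by ring
        _ = (-1) ^ (n - j) * (-1) ^ k := by rw [← h1]
    rw [hsign]
    have : ((n.choose (j + k) : ℤ)) * ((j + k).choose j : ℤ) =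
        (n.choose j : ℤ) * ((n - j).choose k : ℤ) := by exact_mod_cast congrArg Nat.cast hchoose
    linear_combination ((-1 : ℤ) ^ (n - j) * (-1) ^ k) * this
  rw [Finset.sum_congr rfl hterm, ← Finset.mul_sum, Int.alternating_sum_range_choose]
  by_cases h : j = n
  · subst h
    simp
  · have : n - j ≠ 0 := by omega
    rw [if_neg this, if_neg h, mul_zero]


/-- Inverse binomial transform: B̃(n) = Σ (-1)^{n-i} C(n,i) B(i). -/
theorem btilde_inverse_binomial (n : ℕ) :
    (Btilde n : ℤ) =
      ∑ i ∈ Finset.range (n + 1), (-1) ^ (n - i) * (n.choose i : ℤ) * (Bell i : ℤ) := by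
  have hb : ∀ m : ℕ, (Bell m : ℤ) = ∑ j ∈ Finset.range (m + 1), (m.choose j : ℤ) * (Btilde j : ℤ) := by
    intro m
    have := bell_sum m
    push_cast [this]
    rfl
  have step1 : ∑ i ∈ Finset.range (n + 1), (-1 : ℤ) ^ (n - i) * (n.choose i : ℤ) * (Bell i : ℤ) =
      ∑ i ∈ Finset.range (n + 1), ∑ j ∈ Finset.range (n + 1),
        (-1 : ℤ) ^ (n - i) * (n.choose i : ℤ) * ((i.choose j : ℤ) * (Btilde j : ℤ)) := by
    refine Finset.sum_congr rfl fun i hi => ?_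
    rw [Finset.mem_range] at hi
    rw [hb i, Finset.mul_sum]
    refine Finset.sum_subset (by
      apply Finset.range_subset_range.2
      omega) ?_
    intro j _ hj
    rw [Finset.mem_range, not_lt] at hj
    rw [Nat.choose_eq_zero_of_lt (show i < j by omega)]
    ring
  rw [step1, Finset.sum_comm]
  have step2 : ∀ j ∈ Finset.range (n + 1),
      ∑ i ∈ Finset.range (n + 1),
        (-1 : ℤ) ^ (n - i) * (n.choose i : ℤ) * ((i.choose j : ℤ) * (Btilde j : ℤ)) =
      (if j = n then 1 else 0) * (Btilde j : ℤ) := by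
    intro j hj
    rw [Finset.mem_range] at hj
    rw [← alt_sum n j (by omega), Finset.sum_mul]
    refine Finset.sum_congr rfl fun i _ => by ring
  rw [Finset.sum_congr rfl step2]
  have step3 : ∀ j ∈ Finset.range (n + 1),
      (if j = n then (1 : ℤ) else 0) * (Btilde j : ℤ) =
        if j = n then (Btilde n : ℤ) else 0 := by
    intro j _
    by_cases h : j = n
    · rw [if_pos h, if_pos h, h, one_mul]
    · rw [if_neg h, if_neg h, zero_mul]
  rw [Finset.sum_congr rfl step3, Finset.sum_ite_eq' (Finset.range (n + 1)) n
    (fun _ => (Btilde n : ℤ))]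
  simp
end
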